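/- arXiv:2208.10186 — 4 statements merged into one kernel-verified Lean document; each statement's English description precedes it below -/
import Mathlib

section
/- Let Γ be a regular ordered abelian group, i.e., for every nontrivial convex subgroup H of Γ the quotient Γ/H is divisible. Then for every prime p and every infinite convex subset A ⊆ Γ, there exists a ∈ A and b ∈ Γ with a = p · b. -/
/-- A convex subgroup of an ordered abelian group. -/
def IsConvexAddSubgroup {Γ : Type*} [AddCommGroup Γ] [LinearOrder Γ] [IsOrderedAddMonoid Γ] (H : AddSubgroup Γ) : Prop :=
  ∀ h ∈ H, ∀ g : Γ, 0 ≤ g → g ≤ h → g ∈ H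

/-- A regular ordered abelian group: every quotient by a nontrivial convex
subgroup is divisible. -/
def IsRegularOAG (Γ : Type*) [AddCommGroup Γ] [LinearOrder Γ] [IsOrderedAddMonoid Γ] : Prop :=
  ∀ H : AddSubgroup Γ, IsConvexAddSubgroup H → H ≠ ⊥ →
    ∀ x : Γ ⧸ H, ∀ n : ℕ, n ≠ 0 → ∃ y : Γ ⧸ H, n • y = x

section Aux

variable {Γ : Type*} [AddCommGroup Γ] [LinearOrder Γ] [IsOrderedAddMonoid Γ]

private lemma abs_mem_of_mem (H : AddSubgroup Γ) {g : Γ} (hg : g ∈ H) : |g| ∈ H := by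
  rcases abs_cases g with ⟨h1, _⟩ | ⟨h1, _⟩ <;> rw [h1]
  · exact hg
  · exact neg_mem hg

/-- The subgroup of elements `g` such that `A` contains gaps of length `n • |g|` for all `n`. -/
private def gapSubgroup (A : Set Γ) : AddSubgroup Γ where
  carrier := {g | g = 0 ∨ ∀ n : ℕ, ∃ x ∈ A, ∃ y ∈ A, n • |g| ≤ y - x}
  zero_mem' := Or.inl rfl
  neg_mem' := by
    rintro g (rfl | hg)
    · exact Or.inl neg_zero
    · exact Or.inr (by simpa [abs_neg] using hg)
  add_mem' := by
    rintro a b (rfl | ha) hb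
    · simpa using hb
    rcases hb with rfl | hb
    · simpa using Or.inr ha
    refine Or.inr fun n => ?_
    rcases le_total |a| |b| with hab | hab
    · obtain ⟨x, hx, y, hy, hxy⟩ := hb (2 * n)
      refine ⟨x, hx, y, hy, le_trans ?_ hxy⟩
      calc n • |a + b| ≤ n • (|b| + |b|) := by
            refine nsmul_le_nsmul_right ?_ n
            exact le_trans (abs_add_le a b) (add_le_add_left hab _)
        _ = (2 * n) • |b| := by rw [two_mul, add_nsmul, smul_add]
    · obtain ⟨x, hx, y, hy, hxy⟩ := ha (2 * n)
      refine ⟨x, hx, y, hy, le_trans ?_ hxy⟩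
      calc n • |a + b| ≤ n • (|a| + |a|) := by
            refine nsmul_le_nsmul_right ?_ n
            exact le_trans (abs_add_le a b) (add_le_add_right hab _)
        _ = (2 * n) • |a| := by rw [two_mul, add_nsmul, smul_add]

private lemma mem_gapSubgroup {A : Set Γ} {g : Γ} :
    g ∈ gapSubgroup A ↔ (g = 0 ∨ ∀ n : ℕ, ∃ x ∈ A, ∃ y ∈ A, n • |g| ≤ y - x) := Iff.rfl

private lemma gapSubgroup_convex (A : Set Γ) : IsConvexAddSubgroup (gapSubgroup A) := by
  intro h hh g hg0 hgh
  rcases mem_gapSubgroup.mp hh with rfl | hh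
  · exact mem_gapSubgroup.mpr (Or.inl (le_antisymm hgh hg0))
  refine mem_gapSubgroup.mpr (Or.inr fun n => ?_)
  obtain ⟨x, hx, y, hy, hxy⟩ := hh n
  refine ⟨x, hx, y, hy, le_trans ?_ hxy⟩
  refine nsmul_le_nsmul_right ?_ n
  rw [abs_of_nonneg hg0]
  exact le_trans hgh (le_abs_self h)

/-- The convex subgroup generated by `δ`. -/
private def convexGen (δ : Γ) : AddSubgroup Γ where
  carrier := {g | ∃ n : ℕ, |g| ≤ n • δ}
  zero_mem' := ⟨0, by simp⟩
  neg_mem' := by rintro g ⟨n, hn⟩; exact ⟨n, by simpa [abs_neg] using hn⟩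
  add_mem' := by
    rintro a b ⟨n, hn⟩ ⟨m, hm⟩
    exact ⟨n + m, le_trans (abs_add_le a b) (by rw [add_nsmul]; exact add_le_add hn hm)⟩

private lemma convexGen_convex (δ : Γ) : IsConvexAddSubgroup (convexGen δ) := by
  rintro h ⟨n, hn⟩ g hg0 hgh
  exact ⟨n, le_trans (by rw [abs_of_nonneg hg0]; exact le_trans hgh (le_abs_self h)) hn⟩

/-- Least integer multiple of `v` at least `t`. -/
private lemma exists_least_zsmul {v t : Γ} (hv : 0 < v) (harch : ∃ n : ℕ, |t| < n • v) :
    ∃ k : ℤ, t ≤ k • v ∧ k • v < t + v := by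
  obtain ⟨n, hn⟩ := harch
  have hn' : |t| < (n : ℤ) • v := by rwa [natCast_zsmul]
  have hbdd : ∃ b : ℤ, ∀ z : ℤ, t ≤ z • v → b ≤ z := by
    refine ⟨-(n : ℤ), fun z hz => ?_⟩
    by_contra hc
    push_neg at hc
    have h1 : z • v ≤ (-(n : ℤ)) • v := zsmul_le_zsmul_left hv.le hc.le
    rw [neg_zsmul] at h1
    exact absurd hz (not_le.mpr
      (lt_of_le_of_lt h1 (lt_of_lt_of_le (neg_lt_neg hn') (neg_abs_le t))))
  obtain ⟨k, hk, hleast⟩ := Int.exists_least_of_bdd (P := fun z => t ≤ z • v) hbdd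
    ⟨(n : ℤ), le_trans (le_abs_self t) hn'.le⟩
  refine ⟨k, hk, ?_⟩
  have hk1 : ¬ t ≤ (k - 1) • v := fun hc => by have := hleast _ hc; omega
  push_neg at hk1
  have hkv : k • v = (k - 1) • v + v := by rw [sub_zsmul, one_zsmul]; abel
  rw [hkv]
  exact add_lt_add_left hk1 v

end Aux

/-- If `Γ` is a regular ordered abelian group, then for every prime `p` and every
infinite convex subset `A ⊆ Γ` there are `a ∈ A` and `b ∈ Γ` with `a = p • b`. -/
theorem regular_of_infinite_convex_subset {Γ : Type*} [AddCommGroup Γ] [LinearOrder Γ] [IsOrderedAddMonoid Γ]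
    (hreg : IsRegularOAG Γ) (p : ℕ) (hp : p.Prime) (A : Set Γ) (hA : A.Infinite)
    (hconv : ∀ a ∈ A, ∀ c ∈ A, ∀ b : Γ, a ≤ b → b ≤ c → b ∈ A) :
    ∃ a ∈ A, ∃ b : Γ, a = p • b := by
  have hp0 : 0 < p := hp.pos
  obtain ⟨x₀, hx₀, y₀, hy₀, hxy⟩ : ∃ x ∈ A, ∃ y ∈ A, x < y := by
    obtain ⟨x, hx, y, hy, hne⟩ := hA.nontrivial
    rcases hne.lt_or_gt with h | h
    · exact ⟨x, hx, y, hy, h⟩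
    · exact ⟨y, hy, x, hx, h⟩
  by_cases hH : gapSubgroup A = ⊥
  · -- gap subgroup trivial : A-differences are dominated by every positive element
    have hbot : ∀ g : Γ, g ≠ 0 → ∃ n : ℕ, ∀ x ∈ A, ∀ y ∈ A, y - x < n • |g| := by
      intro g hg
      have hng : g ∉ gapSubgroup A := fun hmem => hg (by rwa [hH, AddSubgroup.mem_bot] at hmem)
      rw [mem_gapSubgroup] at hng
      push_neg at hng
      obtain ⟨-, n, hn⟩ := hng
      exact ⟨n, hn⟩
    set δ : Γ := y₀ - x₀ with hδdef
    have hδ : 0 < δ := sub_pos.mpr hxy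
    set C : AddSubgroup Γ := convexGen δ with hCdef
    have hδC : δ ∈ C := ⟨1, by rw [one_nsmul]; exact (abs_of_pos hδ).le⟩
    have hCne : C ≠ ⊥ := fun hb => by
      rw [hb, AddSubgroup.mem_bot] at hδC
      exact hδ.ne' hδC
    obtain ⟨ybar, hybar⟩ := hreg C (convexGen_convex δ) hCne ((x₀ : Γ ⧸ C)) p hp0.ne'
    obtain ⟨b, rfl⟩ := QuotientAddGroup.mk'_surjective C ybar
    have hmem : x₀ - p • b ∈ C := by
      have heq : ((p • b : Γ) : Γ ⧸ C) = (x₀ : Γ ⧸ C) := by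
        rw [← hybar]; exact map_nsmul (QuotientAddGroup.mk' C) p b
      have := QuotientAddGroup.eq.mp heq
      simpa [sub_eq_neg_add] using this
    set h : Γ := x₀ - p • b with hdef
    have hx0h : x₀ - h = p • b := by rw [hdef]; abel
    obtain ⟨N, hN⟩ : ∃ n : ℕ, ∀ x ∈ A, ∀ y ∈ A, y - x < n • δ := by
      obtain ⟨n, hn⟩ := hbot δ hδ.ne'
      exact ⟨n, by simpa [abs_of_pos hδ] using hn⟩
    have arch : ∀ c ∈ C, ∀ g : Γ, 0 < g → ∃ n : ℕ, c < n • g := by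
      intro c hc g hg
      obtain ⟨m, hm⟩ := hbot g hg.ne'
      have hδg : δ < m • g := by
        have := hm x₀ hx₀ y₀ hy₀
        rwa [abs_of_pos hg, ← hδdef] at this
      obtain ⟨k, hk⟩ := hc
      refine ⟨m * k + 1, ?_⟩
      calc c ≤ |c| := le_abs_self c
        _ ≤ k • δ := hk
        _ ≤ k • (m • g) := nsmul_le_nsmul_right hδg.le k
        _ = (m * k) • g := (mul_nsmul g m k).symm
        _ < (m * k + 1) • g := by rw [succ_nsmul]; exact lt_add_of_pos_right _ hg
    by_cases hu : ∃ u ∈ C, 0 < u ∧ ∀ c ∈ C, 0 < c → u ≤ c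
    · -- discrete case: C = ℤ • u
      obtain ⟨u, huC, hu0, hule⟩ := hu
      have hmul : ∀ c ∈ C, ∃ k : ℤ, c = k • u := by
        intro c hc
        obtain ⟨n, hn⟩ := arch |c| (abs_mem_of_mem C hc) u hu0
        obtain ⟨k, hk1, hk2⟩ := exists_least_zsmul hu0 ⟨n, hn⟩
        have hdm : k • u - c ∈ C := sub_mem (AddSubgroup.zsmul_mem C huC k) hc
        rcases eq_or_lt_of_le (sub_nonneg.mpr hk1) with heq | hlt
        · exact ⟨k, (sub_eq_zero.mp heq.symm).symm⟩
        · exfalso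
          have h6 : u + c ≤ k • u := le_sub_iff_add_le.mp (hule _ hdm hlt)
          rw [add_comm] at h6
          exact absurd hk2 (not_lt.mpr h6)
      have hAc : ∀ a ∈ A, a - x₀ + h ∈ C := by
        intro a ha
        refine add_mem ?_ hmem
        refine ⟨N, ?_⟩
        rcases abs_cases (a - x₀) with ⟨h1, _⟩ | ⟨h1, _⟩ <;> rw [h1]
        · exact (hN x₀ hx₀ a ha).le
        · rw [neg_sub]
          exact (hN a ha x₀ hx₀).le
      obtain ⟨k₀, hk₀⟩ := hmul h hmem
      by_cases hgap : ∃ a1 ∈ A, ∃ a2 ∈ A, a1 + (p : ℤ) • u ≤ a2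
      · obtain ⟨a1, ha1, a2, ha2, hle⟩ := hgap
        obtain ⟨k1, hk1⟩ := hmul _ (hAc a1 ha1)
        set j : ℤ := (-k1) % (p : ℤ) with hjdef
        have hj0 : 0 ≤ j := Int.emod_nonneg _ (by exact_mod_cast hp0.ne')
        have hjp : j < (p : ℤ) := Int.emod_lt_of_pos _ (by exact_mod_cast hp0)
        set m : ℤ := -((-k1) / (p : ℤ)) with hmdef
        have hdvd : k1 + j = m * (p : ℤ) := by
          rw [hjdef, Int.emod_def, hmdef]; ring
        refine ⟨a1 + j • u, hconv a1 ha1 a2 ha2 _ ?_ ?_, m • u + b, ?_⟩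
        · exact le_add_of_nonneg_right (zsmul_nonneg hu0.le hj0)
        · exact le_trans (add_le_add_right (zsmul_le_zsmul_left hu0.le hjp.le) a1) hle
        · have key : (a1 + j • u) - x₀ + h = p • (m • u) := by
            have hre : (a1 + j • u) - x₀ + h = (a1 - x₀ + h) + j • u := by abel
            rw [hre, hk1, ← add_zsmul, hdvd, mul_zsmul, natCast_zsmul]
            exact smul_comm m p u
          calc a1 + j • u = ((a1 + j • u) - x₀ + h) + (x₀ - h) := by abel
            _ = p • (m • u) + p • b := by rw [key, hx0h]
            _ = p • (m • u + b) := (smul_add p _ _).symm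
      · -- no gap of length p•u : A would be finite, contradiction
        exfalso
        push_neg at hgap
        refine hA ?_
        have hsub : A ⊆ (fun k : ℤ => x₀ - h + k • u) '' Set.Icc (k₀ - p) (k₀ + p) := by
          intro a ha
          obtain ⟨ka, hka⟩ := hmul _ (hAc a ha)
          have haeq : a = x₀ - h + ka • u := by
            have hre : a = (a - x₀ + h) + (x₀ - h) := by abel
            rw [hre, hka]; abel
          refine ⟨ka, ?_, haeq.symm⟩
          have hd1 : a - x₀ < (p : ℤ) • u :=
            sub_lt_iff_lt_add'.mpr (hgap x₀ hx₀ a ha)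
          have hd2 : x₀ - a < (p : ℤ) • u :=
            sub_lt_iff_lt_add'.mpr (hgap a ha x₀ hx₀)
          have hsubeq : a - x₀ = (ka - k₀) • u := by
            have hre : a - x₀ = (a - x₀ + h) - h := by abel
            rw [hre, hka, hk₀, sub_zsmul, sub_eq_add_neg]
          have hb1 : ka - k₀ < (p : ℤ) := by
            by_contra hc
            push_neg at hc
            have h6 : (p : ℤ) • u ≤ (ka - k₀) • u := zsmul_le_zsmul_left hu0.le hc
            rw [← hsubeq] at h6
            exact absurd hd1 (not_lt.mpr h6)
          have hb2 : -(p : ℤ) < ka - k₀ := by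
            by_contra hc
            push_neg at hc
            have h6 : (ka - k₀) • u ≤ (-(p : ℤ)) • u := zsmul_le_zsmul_left hu0.le hc
            rw [neg_zsmul, ← hsubeq] at h6
            have h7 : (p : ℤ) • u ≤ x₀ - a := by
              have := neg_le_neg h6
              rwa [neg_neg, neg_sub] at this
            exact absurd hd2 (not_lt.mpr h7)
          constructor <;> omega
        exact Set.Finite.subset ((Set.finite_Icc _ _).image _) hsub
    · -- dense case
      push_neg at hu
      have half : ∀ k : ℕ, ∃ ε ∈ C, 0 < ε ∧ (2 ^ k) • ε ≤ δ := by
        intro k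
        induction k with
        | zero => exact ⟨δ, hδC, hδ, by rw [pow_zero, one_nsmul]⟩
        | succ k ih =>
          obtain ⟨ε, hεC, hε, hle⟩ := ih
          obtain ⟨ε1, hε1C, hε10, hε1lt⟩ := hu ε hεC hε
          refine ⟨min ε1 (ε - ε1), ?_, lt_min hε10 (sub_pos.mpr hε1lt), ?_⟩
          · rcases le_total ε1 (ε - ε1) with hc | hc
            · rw [min_eq_left hc]; exact hε1C
            · rw [min_eq_right hc]; exact sub_mem hεC hε1C
          · have h2 : min ε1 (ε - ε1) + min ε1 (ε - ε1) ≤ ε := by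
              calc min ε1 (ε - ε1) + min ε1 (ε - ε1) ≤ ε1 + (ε - ε1) :=
                    add_le_add (min_le_left _ _) (min_le_right _ _)
                _ = ε := by abel
            calc (2 ^ (k + 1)) • min ε1 (ε - ε1) = (2 ^ k) • (2 • min ε1 (ε - ε1)) := by
                  rw [pow_succ, mul_nsmul]
                  exact smul_comm _ _ _
              _ = (2 ^ k) • (min ε1 (ε - ε1) + min ε1 (ε - ε1)) := by rw [two_nsmul]
              _ ≤ (2 ^ k) • ε := nsmul_le_nsmul_right h2 _
              _ ≤ δ := hle
      obtain ⟨ε, hεC, hε0, hεle⟩ := half p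
      have hpε : p • ε ≤ δ := le_trans (nsmul_le_nsmul_left hε0.le (Nat.lt_two_pow_self (n := p)).le) hεle
      have hv0 : 0 < p • ε := nsmul_pos hε0 hp0.ne'
      obtain ⟨n, hn⟩ := arch |h| (abs_mem_of_mem C hmem) (p • ε) hv0
      obtain ⟨k, hk1, hk2⟩ := exists_least_zsmul hv0 ⟨n, hn⟩
      refine ⟨x₀ - h + k • (p • ε), hconv x₀ hx₀ y₀ hy₀ _ ?_ ?_, b + k • ε, ?_⟩
      · have hre : x₀ - h + k • (p • ε) = x₀ + (k • (p • ε) - h) := by abel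
        rw [hre]
        exact le_add_of_nonneg_right (sub_nonneg.mpr hk1)
      · have h7 : k • (p • ε) < h + δ := lt_of_lt_of_le hk2 (add_le_add_right hpε h)
        have hy0 : y₀ = x₀ + δ := by rw [hδdef]; abel
        refine le_of_lt ?_
        calc x₀ - h + k • (p • ε) < x₀ - h + (h + δ) := add_lt_add_right h7 _
          _ = x₀ + δ := by abel
          _ = y₀ := hy0.symm
      · calc x₀ - h + k • (p • ε) = p • b + k • (p • ε) := by rw [hx0h]
          _ = p • b + p • (k • ε) := by rw [smul_comm]
          _ = p • (b + k • ε) := (smul_add p _ _).symm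
  · -- gap subgroup nontrivial
    obtain ⟨ybar, hybar⟩ := hreg (gapSubgroup A) (gapSubgroup_convex A) hH
      ((x₀ : Γ ⧸ gapSubgroup A)) p hp0.ne'
    obtain ⟨b, rfl⟩ := QuotientAddGroup.mk'_surjective (gapSubgroup A) ybar
    have hmem : x₀ - p • b ∈ gapSubgroup A := by
      have heq : ((p • b : Γ) : Γ ⧸ gapSubgroup A) = (x₀ : Γ ⧸ gapSubgroup A) := by
        rw [← hybar]; exact map_nsmul (QuotientAddGroup.mk' (gapSubgroup A)) p b
      have := QuotientAddGroup.eq.mp heq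
      simpa [sub_eq_neg_add] using this
    set h : Γ := x₀ - p • b with hdef
    have hx0h : x₀ - h = p • b := by rw [hdef]; abel
    rcases mem_gapSubgroup.mp hmem with h0 | hgap
    · exact ⟨x₀, hx₀, b, by rw [← hx0h, h0, sub_zero]⟩
    obtain ⟨x, hx, y, hy, hxy2⟩ := hgap (2 * p)
    have h2 : p • |h| + p • |h| ≤ y - x := by rwa [two_mul, add_nsmul] at hxy2
    have habs1 : |h| ≤ p • |h| := by
      calc |h| = 1 • |h| := (one_nsmul _).symm
        _ ≤ p • |h| := nsmul_le_nsmul_left (abs_nonneg h) hp0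
    have heq2 : x₀ + (p - 1) • h = p • (b + h) := by
      have hkey : h + (p - 1) • h = p • h := by
        have hnat : 1 + (p - 1) = p := by omega
        calc h + (p - 1) • h = 1 • h + (p - 1) • h := by rw [one_nsmul]
          _ = (1 + (p - 1)) • h := (add_nsmul h 1 (p - 1)).symm
          _ = p • h := by rw [hnat]
      rw [smul_add, ← hx0h, ← hkey]
      abel
    have e1 : (p - 1) • h ≤ p • |h| :=
      le_trans (nsmul_le_nsmul_right (le_abs_self h) _)
        (nsmul_le_nsmul_left (abs_nonneg h) (by omega))
    have e2 : -(p • |h|) ≤ (p - 1) • h := by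
      have h3 : (p - 1) • (-|h|) ≤ (p - 1) • h := nsmul_le_nsmul_right (neg_abs_le h) _
      rw [smul_neg] at h3
      have h4 : (p - 1) • |h| ≤ p • |h| := nsmul_le_nsmul_left (abs_nonneg h) (by omega)
      exact le_trans (neg_le_neg h4) h3
    have e3 : -h ≤ p • |h| := le_trans (neg_le_abs h) habs1
    have e4 : -(p • |h|) ≤ -h := neg_le_neg (le_trans (le_abs_self h) habs1)
    by_cases hup : x₀ + p • |h| ≤ y
    · rcases le_or_gt 0 h with hpos | hneg
      · refine ⟨x₀ + (p - 1) • h, hconv x₀ hx₀ y hy _ ?_ ?_, b + h, heq2⟩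
        · exact le_add_of_nonneg_right (nsmul_nonneg hpos _)
        · exact le_trans (add_le_add_right e1 x₀) hup
      · refine ⟨x₀ - h, hconv x₀ hx₀ y hy _ ?_ ?_, b, hx0h⟩
        · exact (le_sub_self_iff x₀).mpr hneg.le
        · refine le_trans ?_ hup
          rw [sub_eq_add_neg]
          exact add_le_add_right e3 x₀
    · push_neg at hup
      have hlow : x ≤ x₀ - p • |h| := by
        have t1 : (p • |h| + p • |h|) + x ≤ y := le_sub_iff_add_le.mp h2
        have t2 : (p • |h| + x) + p • |h| < x₀ + p • |h| := by
          have t2' := lt_of_le_of_lt t1 hup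
          have hre : (p • |h| + x) + p • |h| = (p • |h| + p • |h|) + x := by abel
          rwa [hre]
        have t3 : p • |h| + x < x₀ := lt_of_add_lt_add_right t2
        rw [le_sub_iff_add_le, add_comm]
        exact t3.le
      rcases le_or_gt 0 h with hpos | hneg
      · refine ⟨x₀ - h, hconv x hx x₀ hx₀ _ ?_ ?_, b, hx0h⟩
        · refine le_trans hlow ?_
          rw [sub_le_sub_iff_left]
          exact le_trans (le_abs_self h) habs1
        · exact sub_le_self x₀ hpos
      · refine ⟨x₀ + (p - 1) • h, hconv x hx x₀ hx₀ _ ?_ ?_, b + h, heq2⟩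
        · refine le_trans hlow ?_
          rw [sub_le_iff_le_add]
          calc x₀ ≤ x₀ + ((p - 1) • h + p • |h|) := le_add_of_nonneg_right (by
                have := e2
                rwa [neg_le_iff_add_nonneg] at this)
            _ = x₀ + (p - 1) • h + p • |h| := by abel
        · exact add_le_of_nonpos_right (nsmul_nonpos hneg.le _)
end

section
/- Every regular discrete ordered abelian group is elementarily equivalent to (ℤ, +, <) in the language of ordered groups. -/
open FirstOrder

/-- Function symbols of the first-order language of ordered abelian groups:
a constant `0`, a unary `-`, and a binary `+`. -/
def oagFunctions : ℕ → Type
  | 0 => Unit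
  | 1 => Unit
  | 2 => Unit
  | _ => Empty

/-- Relation symbols: a single binary relation `≤`. -/
def oagRelations : ℕ → Type
  | 2 => Unit
  | _ => Empty

/-- The first-order language of ordered abelian groups. -/
def oagLang : Language := ⟨oagFunctions, oagRelations⟩

/-- Any linearly ordered abelian group is an `oagLang`-structure. -/
instance oagStructure (Γ : Type*) [AddCommGroup Γ] [LinearOrder Γ] [IsOrderedAddMonoid Γ] :
    oagLang.Structure Γ where
  funMap {n} f x :=
    match n, f with
    | 0, _ => 0
    | 1, _ => -(x 0)
    | 2, _ => x 0 + x 1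
    | (_ + 3), f => f.elim
  RelMap {n} r x :=
    match n, r with
    | 0, r => r.elim
    | 1, r => r.elim
    | 2, _ => x 0 ≤ x 1
    | (_ + 3), r => r.elim

section OAGDev
section A
variable {G : Type*} [AddCommGroup G] [LinearOrder G] [IsOrderedAddMonoid G] {u : G}

/-- An element bounded by a multiple of the minimal positive element is itself a multiple. -/
lemma oag_mult_of_bounded (hu0 : 0 < u) (humin : ∀ h : G, 0 < h → u ≤ h)
    {g : G} {T : ℤ} (h1 : -(T • u) ≤ g) (h2 : g ≤ T • u) :
    ∃ z : ℤ, |z| ≤ T ∧ g = z • u := by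
  obtain ⟨zm, hzm, hub⟩ := Int.exists_greatest_of_bdd (P := fun z => z • u ≤ g)
    ⟨T, fun z hz => by
      by_contra hc
      push_neg at hc
      exact absurd (hz.trans h2) (not_le.2 (zsmul_lt_zsmul_left hu0 hc))⟩
    ⟨-T, show (-T) • u ≤ g by rw [neg_smul]; exact h1⟩
  have hlt : g < (zm + 1) • u := by
    by_contra hc
    push_neg at hc
    exact absurd (hub _ hc) (by omega)
  have h0 : (0:G) ≤ g - zm • u := sub_nonneg.2 hzm
  have hu' : g - zm • u < u := by
    rw [sub_lt_iff_lt_add]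
    calc g < (zm+1) • u := hlt
    _ = u + zm • u := by rw [add_zsmul, one_zsmul, add_comm]
  have hg : g = zm • u := by
    rcases h0.lt_or_eq with h | h
    · exact absurd (humin _ h) (not_le.2 hu')
    · rw [← sub_eq_zero, ← h]
  subst hg
  refine ⟨zm, abs_le.2 ⟨?_, ?_⟩, rfl⟩
  · rw [← neg_smul] at h1
    exact (zsmul_le_zsmul_iff_left hu0).1 h1
  · exact (zsmul_le_zsmul_iff_left hu0).1 h2

/-- Residue uniqueness: if `z • u` is divisible by `m` in `G`, then `m ∣ z`. -/
lemma oag_udvd (hu0 : 0 < u) (humin : ∀ h : G, 0 < h → u ≤ h)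
    {m z : ℤ} (hm : 0 < m) (h : ∃ x : G, z • u = m • x) : m ∣ z := by
  obtain ⟨x, hx⟩ := h
  have hr0 : 0 ≤ z % m := Int.emod_nonneg z hm.ne'
  have hrm : z % m < m := Int.emod_lt_of_pos z hm
  have hz : z = m * (z / m) + z % m := (Int.mul_ediv_add_emod z m).symm
  have hru : (z % m) • u = m • (x - (z / m) • u) := by
    have h1 : z • u = (m * (z / m)) • u + (z % m) • u := by
      rw [← add_smul, ← hz]
    rw [smul_sub, ← hx, h1, mul_smul]; abel
  rcases hr0.lt_or_eq with h0 | h0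
  · exfalso
    have hx0 : 0 < x - (z / m) • u := by
      by_contra hc
      push_neg at hc
      have : m • (x - (z / m) • u) ≤ m • (0:G) := zsmul_le_zsmul_right hm.le hc
      rw [smul_zero] at this
      exact absurd (hru ▸ this) (not_le.2 (zsmul_pos hu0 h0))
    have h1 : u ≤ x - (z / m) • u := humin _ hx0
    have h2 : m • u ≤ m • (x - (z / m) • u) := zsmul_le_zsmul_right hm.le h1
    rw [← hru] at h2
    exact absurd h2 (not_le.2 (zsmul_lt_zsmul_left hu0 hrm))
  · exact ⟨z / m, by omega⟩

end A

section B
variable {G : Type*} [AddCommGroup G] [LinearOrder G] [IsOrderedAddMonoid G] {u : G}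

/-- The convex subgroup generated by `u`. -/
def oagHull (u : G) : AddSubgroup G where
  carrier := {g | ∃ k : ℕ, |g| ≤ k • u}
  zero_mem' := ⟨0, by simp⟩
  add_mem' := by
    rintro a b ⟨k1, h1⟩ ⟨k2, h2⟩
    exact ⟨k1 + k2, (abs_add_le a b).trans (by rw [add_nsmul]; exact add_le_add h1 h2)⟩
  neg_mem' := by
    rintro a ⟨k, h⟩
    exact ⟨k, by rwa [abs_neg]⟩

/-- Division with remainder by any positive integer, for regular discrete groups. -/
lemma oag_div (hreg : IsRegularOAG G) (hu0 : 0 < u) (humin : ∀ h : G, 0 < h → u ≤ h)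
    (m : ℤ) (hm : 0 < m) (g : G) :
    ∃ (h : G) (z : ℤ), 0 ≤ z ∧ z < m ∧ g = m • h + z • u := by
  have hconv : IsConvexAddSubgroup (oagHull u) := by
    rintro h ⟨k, hk⟩ g' hg0 hgh
    exact ⟨k, by rw [abs_of_nonneg hg0]; exact hgh.trans ((le_abs_self h).trans hk)⟩
  have hne : oagHull u ≠ ⊥ := by
    intro hbot
    have : u ∈ oagHull u := ⟨1, by rw [one_nsmul, abs_of_pos hu0]⟩
    rw [hbot, AddSubgroup.mem_bot] at this
    exact absurd this hu0.ne'
  obtain ⟨y, hy⟩ := hreg (oagHull u) hconv hne (QuotientAddGroup.mk g) m.toNat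
    (by omega)
  obtain ⟨y', rfl⟩ := QuotientAddGroup.mk_surjective y
  have hmem : g - m.toNat • y' ∈ oagHull u := by
    have : (QuotientAddGroup.mk (m.toNat • y') : G ⧸ oagHull u) = QuotientAddGroup.mk g := by
      rw [← hy]; rfl
    rwa [QuotientAddGroup.eq, neg_add_eq_sub] at this
    -- may need adjusting
  obtain ⟨k, hk⟩ := hmem
  have hku : ((k:ℤ)) • u = k • u := natCast_zsmul u k
  obtain ⟨z, _, hz⟩ := oag_mult_of_bounded hu0 humin (g := g - m.toNat • y')
    (T := (k:ℤ)) (by rw [hku]; exact (neg_le_neg hk).trans (neg_abs_le _))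
    (by rw [hku]; exact (le_abs_self _).trans hk)
  refine ⟨y' + (z / m) • u, z % m, Int.emod_nonneg z hm.ne', Int.emod_lt_of_pos z hm, ?_⟩
  have h1 : z = m * (z / m) + z % m := (Int.mul_ediv_add_emod z m).symm
  have h2 : g = m.toNat • y' + z • u := by rw [← hz]; abel
  have hmz : ((m.toNat:ℤ)) = m := Int.toNat_of_nonneg hm.le
  have h3 : m • y' = m.toNat • y' := by nth_rewrite 1 [← hmz]; exact natCast_zsmul y' m.toNat
  calc g = m.toNat • y' + z • u := h2
    _ = m.toNat • y' + ((m * (z / m)) • u + (z % m) • u) := by rw [← add_smul, ← h1]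
    _ = m • (y' + (z / m) • u) + (z % m) • u := by
        rw [smul_add, h3, mul_smul]; abel

end B

section C
variable {G : Type*} [AddCommGroup G] [LinearOrder G] [IsOrderedAddMonoid G]

def zcomb {n : ℕ} (c : Fin n → ℤ) (d : ℤ) (v : Fin n → ℤ) : ℤ := (∑ i, c i * v i) + d
def gcomb {n : ℕ} (u : G) (c : Fin n → ℤ) (d : ℤ) (w : Fin n → G) : G :=
  (∑ i, c i • w i) + d • u

variable {u : G} {n : ℕ} {c c' : Fin n → ℤ} {d d' : ℤ} {v : Fin n → ℤ} {w : Fin n → G}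

lemma zcomb_neg : zcomb (fun i => -c i) (-d) v = -zcomb c d v := by
  simp [zcomb, neg_mul]; ring

lemma gcomb_neg : gcomb u (fun i => -c i) (-d) w = -gcomb u c d w := by
  simp [gcomb, neg_smul]; abel

lemma zcomb_lincomb (x y : ℤ) :
    zcomb (fun i => x * c i + y * c' i) (x * d + y * d') v
      = x * zcomb c d v + y * zcomb c' d' v := by
  simp only [zcomb, add_mul, Finset.sum_add_distrib, mul_add, Finset.mul_sum]
  simp_rw [mul_assoc]
  ring

lemma gcomb_lincomb (x y : ℤ) :
    gcomb u (fun i => x * c i + y * c' i) (x * d + y * d') w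
      = x • gcomb u c d w + y • gcomb u c' d' w := by
  simp [gcomb, Finset.smul_sum, Finset.sum_add_distrib, add_smul, mul_smul, smul_add]; abel

lemma zcomb_smul (x : ℤ) : zcomb (fun i => x * c i) (x * d) v = x * zcomb c d v := by
  simp [zcomb, Finset.mul_sum, mul_assoc, mul_add]

lemma gcomb_smul (x : ℤ) : gcomb u (fun i => x * c i) (x * d) w = x • gcomb u c d w := by
  simp [gcomb, Finset.smul_sum, mul_smul, smul_add]

lemma zcomb_addconst (e : ℤ) : zcomb c (d + e) v = zcomb c d v + e := by
  simp [zcomb]; ring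

lemma gcomb_addconst (e : ℤ) : gcomb u c (d + e) w = gcomb u c d w + e • u := by
  simp [gcomb, add_smul]; abel

lemma zcomb_snoc {c : Fin (n+1) → ℤ} {a : ℤ} :
    zcomb c d (Fin.snoc v a) = c (Fin.last n) * a + zcomb (fun i => c i.castSucc) d v := by
  simp [zcomb, Fin.sum_univ_castSucc]; ring

lemma gcomb_snoc {c : Fin (n+1) → ℤ} {b : G} :
    gcomb u c d (Fin.snoc w b) = c (Fin.last n) • b + gcomb u (fun i => c i.castSucc) d w := by
  simp [gcomb, Fin.sum_univ_castSucc]; abel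

def OAGApprox (u : G) (N M : ℕ) {n : ℕ} (v : Fin n → ℤ) (w : Fin n → G) : Prop :=
  (∀ i, ∃ h : G, w i - (v i) • u = (M : ℤ) • h) ∧
  (∀ c : Fin n → ℤ, ∀ d : ℤ, (∀ i, |c i| ≤ (N:ℤ)) → |d| ≤ (N:ℤ) →
    (zcomb c d v ≤ 0 ↔ gcomb u c d w ≤ 0))

variable {N M : ℕ}

lemma OAGApprox.le (h : OAGApprox u N M v w) (hc : ∀ i, |c i| ≤ (N:ℤ)) (hd : |d| ≤ (N:ℤ)) :
    zcomb c d v ≤ 0 ↔ gcomb u c d w ≤ 0 := h.2 c d hc hd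

lemma OAGApprox.lt (h : OAGApprox u N M v w) (hc : ∀ i, |c i| ≤ (N:ℤ)) (hd : |d| ≤ (N:ℤ)) :
    zcomb c d v < 0 ↔ gcomb u c d w < 0 := by
  have h2 := h.2 (fun i => -c i) (-d) (fun i => by rw [abs_neg]; exact hc i)
    (by rw [abs_neg]; exact hd)
  rw [zcomb_neg, gcomb_neg, neg_nonpos, neg_nonpos] at h2
  constructor
  · intro hx
    rcases lt_or_ge (gcomb u c d w) 0 with h' | h'
    · exact h'
    · exact absurd (h2.2 h') (not_le.2 hx)
  · intro hx
    rcases lt_or_ge (zcomb c d v) 0 with h' | h'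
    · exact h'
    · exact absurd (h2.1 h') (not_le.2 hx)

lemma OAGApprox.pos (h : OAGApprox u N M v w) (hc : ∀ i, |c i| ≤ (N:ℤ)) (hd : |d| ≤ (N:ℤ)) :
    0 < zcomb c d v ↔ 0 < gcomb u c d w := by
  have h2 := h.lt (c := fun i => -c i) (d := -d) (fun i => by rw [abs_neg]; exact hc i)
    (by rw [abs_neg]; exact hd)
  rw [zcomb_neg, gcomb_neg, neg_lt_zero, neg_lt_zero] at h2
  exact h2

lemma OAGApprox.eq (h : OAGApprox u N M v w) (hc : ∀ i, |c i| ≤ (N:ℤ)) (hd : |d| ≤ (N:ℤ)) :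
    zcomb c d v = 0 ↔ gcomb u c d w = 0 := by
  have h1 := h.le hc hd
  have h2 := h.lt hc hd
  constructor
  · intro hx
    rcases lt_trichotomy (gcomb u c d w) 0 with h' | h' | h'
    · exact absurd (h2.2 h') (by omega)
    · exact h'
    · exact absurd (h1.1 hx.le) (not_le.2 h')
  · intro hx
    rcases lt_trichotomy (zcomb c d v) 0 with h' | h' | h'
    · exact absurd (h2.1 h') (not_lt.2 hx.ge)
    · exact h'
    · exact absurd (h1.2 hx.le) (not_le.2 h')

lemma OAGApprox.mono (h : OAGApprox u N M v w) {N' M' : ℕ} (hN : N' ≤ N) (hM : (M':ℤ) ∣ M) :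
    OAGApprox u N' M' v w := by
  obtain ⟨e, he⟩ := hM
  refine ⟨fun i => ?_, fun c d hc hd => h.2 c d (fun i => (hc i).trans (by exact_mod_cast hN))
    (hd.trans (by exact_mod_cast hN))⟩
  obtain ⟨x, hx⟩ := h.1 i
  exact ⟨e • x, by rw [hx, he, mul_smul]⟩

lemma OAGApprox.cong (h : OAGApprox u N M v w) (c : Fin n → ℤ) (d : ℤ) :
    ∃ x : G, gcomb u c d w - (zcomb c d v) • u = (M:ℤ) • x := by
  choose f hf using h.1
  refine ⟨∑ i, c i • f i, ?_⟩
  have : gcomb u c d w - (zcomb c d v) • u = ∑ i, c i • (w i - (v i) • u) := by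
    rw [gcomb, zcomb, add_smul, Finset.sum_smul]
    rw [show ∀ x y z t : G, x + y - (z + t) = (x - z) + (y - t) from fun x y z t => by abel]
    rw [← Finset.sum_sub_distrib]
    have : ∀ i : Fin n, c i • w i - (c i * v i) • u = c i • (w i - (v i) • u) := fun i => by
      rw [smul_sub, mul_smul]
    simp_rw [this]
    simp
  rw [this, Finset.smul_sum]
  exact Finset.sum_congr rfl fun i _ => by rw [hf i, smul_comm]

end C

section D
variable {G : Type*} [AddCommGroup G] [LinearOrder G] [IsOrderedAddMonoid G] {u : G} {n N M : ℕ}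

/-- Coefficient-bound bump for the back-and-forth step. -/
def oagBumpN (N M : ℕ) : ℕ := (N+2)*(N+2)*(N + N.factorial*M + N.factorial + 2)
/-- Modulus bump. -/
def oagBumpM (N M : ℕ) : ℕ := N.factorial * M

lemma le_oagBumpN : N ≤ oagBumpN N M := by
  have := N.factorial_pos
  unfold oagBumpN
  have h1 : N + 2 ≤ (N+2)*(N+2) := Nat.le_mul_of_pos_right _ (by omega)
  have h2 : (N+2)*(N+2) ≤ (N+2)*(N+2)*(N + N.factorial*M + N.factorial + 2) :=
    Nat.le_mul_of_pos_right _ (by omega)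
  omega

lemma int_smul_pos_iff {x : ℤ} (hx : 0 < x) (g : G) : 0 < x • g ↔ 0 < g := by
  constructor
  · intro h
    by_contra hc
    push_neg at hc
    have : x • g ≤ x • (0:G) := zsmul_le_zsmul_right hx.le hc
    rw [smul_zero] at this; exact absurd h (not_lt.2 this)
  · exact fun h => zsmul_pos h hx

lemma int_smul_neg_iff {x : ℤ} (hx : 0 < x) (g : G) : x • g < 0 ↔ g < 0 := by
  have := int_smul_pos_iff hx (-g)
  rw [smul_neg, neg_pos, neg_pos] at this
  exact this

lemma int_mul_pos_iff {x y : ℤ} (hx : 0 < x) : 0 < x * y ↔ 0 < y := by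
  constructor
  · intro h; nlinarith
  · intro h; positivity

lemma int_mul_neg_iff {x y : ℤ} (hx : 0 < x) : x * y < 0 ↔ y < 0 := by
  constructor
  · intro h; nlinarith
  · intro h; exact mul_neg_of_pos_of_neg hx h

/-- Verification: strict sign-matching for all small constraints involving the new pair
`(a, b)` plus the congruence for `b` yields the approximation for the extended tuples. -/
lemma oag_verify {v : Fin n → ℤ} {w : Fin n → G} {a : ℤ} {b : G}
    (hE : OAGApprox u (oagBumpN N M) (oagBumpM N M) v w)
    (hb : ∃ x : G, b - a • u = (M:ℤ) • x)
    (hsign : ∀ (k : ℤ) (c : Fin n → ℤ) (d : ℤ), 1 ≤ k → k ≤ (N:ℤ) →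
      (∀ i, |c i| ≤ (N:ℤ)) → |d| ≤ (N:ℤ) →
      ((0 < k * a + zcomb c d v ↔ 0 < k • b + gcomb u c d w) ∧
       (k * a + zcomb c d v < 0 ↔ k • b + gcomb u c d w < 0))) :
    OAGApprox u N M (Fin.snoc v a) (Fin.snoc w b) := by
  constructor
  · intro i
    refine Fin.lastCases ?_ ?_ i
    · simpa using hb
    · intro j
      obtain ⟨x, hx⟩ := hE.1 j
      refine ⟨(N.factorial : ℤ) • x, ?_⟩
      simp only [Fin.snoc_castSucc]
      rw [hx, ← mul_smul, oagBumpM]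
      push_cast
      ring_nf
  · intro c d hc hd
    rw [zcomb_snoc, gcomb_snoc]
    set k := c (Fin.last n) with hkdef
    have hkN : |k| ≤ (N:ℤ) := hc _
    have hc' : ∀ i, |c (Fin.castSucc i)| ≤ (N:ℤ) := fun i => hc _
    rcases lt_trichotomy k 0 with hk0 | hk0 | hk0
    · have H := hsign (-k) (fun i => -(c i.castSucc)) (-d) (by omega)
        (by rw [abs_le] at hkN; omega)
        (fun i => by rw [abs_neg]; exact hc' i) (by rw [abs_neg]; exact hd)
      rw [zcomb_neg, gcomb_neg] at H
      have e1 : -k * a + -zcomb (fun i => c i.castSucc) d v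
          = -(k * a + zcomb (fun i => c i.castSucc) d v) := by ring
      have e2 : (-k) • b + -gcomb u (fun i => c i.castSucc) d w
          = -(k • b + gcomb u (fun i => c i.castSucc) d w) := by
        rw [neg_smul]; abel
      rw [e1, e2, neg_pos, neg_pos, neg_lt_zero, neg_lt_zero] at H
      constructor
      · intro hx
        by_contra hcon
        push_neg at hcon
        exact absurd (H.2.2 hcon) (not_lt.2 hx)
      · intro hx
        by_contra hcon
        push_neg at hcon
        exact absurd (H.2.1 hcon) (not_lt.2 hx)
    · rw [hk0, zero_mul, zero_smul, zero_add, zero_add]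
      exact (hE.mono (N' := N) (M' := M) le_oagBumpN ⟨(N.factorial:ℤ), by unfold oagBumpM; push_cast; ring⟩).le hc' hd
    · have H := hsign k (fun i => c i.castSucc) d (by omega) ((abs_le.1 hkN).2) hc' hd
      constructor
      · intro hx
        by_contra hcon
        push_neg at hcon
        exact absurd (H.1.2 hcon) (not_lt.2 hx)
      · intro hx
        by_contra hcon
        push_neg at hcon
        exact absurd (H.1.1 hcon) (not_lt.2 hx)

end D

section E
variable {G : Type*} [AddCommGroup G] [LinearOrder G] [IsOrderedAddMonoid G] {u : G} {n N M : ℕ}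

lemma oag_k_dvd_factorial {k : ℤ} {N : ℕ} (h1 : 1 ≤ k) (h2 : k ≤ (N:ℤ)) :
    k ∣ (N.factorial : ℤ) := by
  lift k to ℕ using (by omega) with k'
  exact_mod_cast Nat.dvd_factorial (by omega) (by exact_mod_cast h2)

noncomputable def oagJ (n N : ℕ) : Finset (ℤ × (Fin n → ℤ) × ℤ) :=
  (Finset.Icc 1 (N:ℤ)) ×ˢ
    ((Fintype.piFinset fun _ : Fin n => Finset.Icc (-(N:ℤ)) (N:ℤ)) ×ˢ
      (Finset.Icc (-(N:ℤ)) (N:ℤ)))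

lemma mem_oagJ {j : ℤ × (Fin n → ℤ) × ℤ} :
    j ∈ oagJ n N ↔ 1 ≤ j.1 ∧ j.1 ≤ (N:ℤ) ∧ (∀ i, |j.2.1 i| ≤ (N:ℤ)) ∧ |j.2.2| ≤ (N:ℤ) := by
  obtain ⟨k, c, d⟩ := j
  simp only [oagJ, Finset.mem_product, Fintype.mem_piFinset, Finset.mem_Icc, abs_le]
  tauto

def oagZA {n : ℕ} (a : ℤ) (v : Fin n → ℤ) (j : ℤ × (Fin n → ℤ) × ℤ) : ℤ :=
  j.1 * a + zcomb j.2.1 j.2.2 v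

def oagZE {n : ℕ} (F : ℤ) (v : Fin n → ℤ) (j : ℤ × (Fin n → ℤ) × ℤ) : ℤ :=
  (F / j.1) * zcomb j.2.1 j.2.2 v

def oagGE {n : ℕ} (F : ℤ) (u : G) (w : Fin n → G) (j : ℤ × (Fin n → ℤ) × ℤ) : G :=
  (F / j.1) • gcomb u j.2.1 j.2.2 w

def oagGB {n : ℕ} (u : G) (b : G) (w : Fin n → G) (j : ℤ × (Fin n → ℤ) × ℤ) : G :=
  j.1 • b + gcomb u j.2.1 j.2.2 w

lemma oagZE_spec {F a : ℤ} {v : Fin n → ℤ} {j : ℤ × (Fin n → ℤ) × ℤ}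
    (hdvd : j.1 ∣ F) (hj1 : 1 ≤ j.1) :
    (F / j.1) * oagZA a v j = F * a + oagZE F v j := by
  have h := Int.ediv_mul_cancel hdvd
  rw [oagZA, oagZE, mul_add, ← mul_assoc, h]

lemma oagGE_spec {F : ℤ} {b : G} {w : Fin n → G} {j : ℤ × (Fin n → ℤ) × ℤ}
    (hdvd : j.1 ∣ F) :
    (F / j.1) • oagGB u b w j = F • b + oagGE F u w j := by
  have h := Int.ediv_mul_cancel hdvd
  rw [oagGB, oagGE, smul_add, ← mul_smul, h]

lemma oag_window_above (hu0 : 0 < u)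
    (hdiv : ∀ m : ℤ, 0 < m → ∀ g : G, ∃ h z, 0 ≤ z ∧ z < m ∧ g = m • h + z • u)
    {P Mz : ℤ} (hP : 0 < P) (hMz : 0 < Mz) (g1 : G) (a : ℤ) :
    ∃ b : G, (∃ x : G, b - a • u = Mz • x) ∧ g1 < P • b ∧ P • b ≤ g1 + (P * Mz) • u := by
  obtain ⟨h, z, hz0, hzlt, hg⟩ := hdiv (P * Mz) (by positivity) (g1 - (P * a) • u)
  refine ⟨a • u + Mz • h + Mz • u, ⟨h + u, by rw [smul_add]; abel⟩, ?_, ?_⟩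
  all_goals
    have hkey : P • (a • u + Mz • h + Mz • u) = g1 + ((P * Mz) - z) • u := by
      have h2 : (P * Mz) • h = g1 - (P * a) • u - z • u := by rw [hg]; abel
      rw [smul_add, smul_add, ← mul_smul, ← mul_smul, ← mul_smul, h2, sub_smul]
      abel
  · rw [hkey]
    exact lt_add_of_pos_right g1 (zsmul_pos hu0 (by linarith))
  · rw [hkey]
    exact add_le_add_right (zsmul_le_zsmul_left hu0.le (by linarith)) g1

lemma oag_window_below (hu0 : 0 < u)
    (hdiv : ∀ m : ℤ, 0 < m → ∀ g : G, ∃ h z, 0 ≤ z ∧ z < m ∧ g = m • h + z • u)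
    {P Mz : ℤ} (hP : 0 < P) (hMz : 0 < Mz) (g2 : G) (a : ℤ) :
    ∃ b : G, (∃ x : G, b - a • u = Mz • x) ∧ P • b < g2 := by
  obtain ⟨h, z, hz0, hzlt, hg⟩ := hdiv (P * Mz) (by positivity) (g2 - (P * a) • u)
  refine ⟨a • u + Mz • h - Mz • u, ⟨h - u, by rw [smul_sub]; abel⟩, ?_⟩
  have hkey : P • (a • u + Mz • h - Mz • u) = g2 - (z + P * Mz) • u := by
    have h2 : (P * Mz) • h = g2 - (P * a) • u - z • u := by rw [hg]; abel
    rw [smul_sub, smul_add, ← mul_smul, ← mul_smul, ← mul_smul, h2, add_smul]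
    abel
  rw [hkey]
  exact sub_lt_self g2 (zsmul_pos hu0 (by linarith))


lemma oag_bumpN_ge {N M : ℕ} (hM : 0 < M) {A : ℤ}
    (hA : A ≤ (N:ℤ)*(N:ℤ) + (N:ℤ)*((N:ℤ) + ((N.factorial:ℤ)*(M:ℤ) + (N.factorial:ℤ)))
        + 2*((N.factorial:ℤ)*(M:ℤ) + (N.factorial:ℤ))) :
    A ≤ ((oagBumpN N M : ℕ):ℤ) := by
  have hNB : ((oagBumpN N M : ℕ):ℤ) = ((N:ℤ)+2)*((N:ℤ)+2)*((N:ℤ)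
      + ((N.factorial:ℤ)*(M:ℤ) + (N.factorial:ℤ)) + 2) := by
    rw [oagBumpN]; push_cast; ring
  have hN0 : (0:ℤ) ≤ (N:ℤ) := Nat.cast_nonneg N
  have hF1 : (1:ℤ) ≤ (N.factorial:ℤ) := by exact_mod_cast N.factorial_pos
  have hM1 : (1:ℤ) ≤ (M:ℤ) := by exact_mod_cast hM
  have hS2 : (2:ℤ) ≤ (N.factorial:ℤ)*(M:ℤ) + (N.factorial:ℤ) := by nlinarith
  have hS0 : (0:ℤ) ≤ (N.factorial:ℤ)*(M:ℤ) + (N.factorial:ℤ) := by linarith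
  rw [hNB]
  nlinarith [mul_nonneg hN0 hN0, mul_nonneg (mul_nonneg hN0 hN0) hN0,
    mul_nonneg (mul_nonneg hN0 hN0) hS0, mul_nonneg hN0 hS0]

/-- Exact case of the back-and-forth step: the new elements satisfy a common small
linear equation. -/
lemma oag_exact_step (hu0 : 0 < u) (hM : 0 < M) {v : Fin n → ℤ} {w : Fin n → G}
    {a : ℤ} {b : G} {k0 : ℤ} {c0 : Fin n → ℤ} {d0 : ℤ}
    (hk01 : 1 ≤ k0) (hk0N : k0 ≤ (N:ℤ)) (hc0 : ∀ i, |c0 i| ≤ (N:ℤ))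
    (hd0 : |d0| ≤ (N:ℤ) + ((N.factorial:ℤ) * M + (N.factorial:ℤ)))
    (hE : OAGApprox u (oagBumpN N M) (oagBumpM N M) v w)
    (heqz : k0 * a = zcomb c0 d0 v) (heqg : k0 • b = gcomb u c0 d0 w)
    (hb : ∃ x : G, b - a • u = (M:ℤ) • x) :
    OAGApprox u N M (Fin.snoc v a) (Fin.snoc w b) := by
  have hF1 : (1:ℤ) ≤ (N.factorial : ℤ) := by exact_mod_cast N.factorial_pos
  have hM1 : (1:ℤ) ≤ (M:ℤ) := by exact_mod_cast hM
  have hNB : ((oagBumpN N M : ℕ):ℤ)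
      = ((N:ℤ)+2)*((N:ℤ)+2)*((N:ℤ) + (N.factorial:ℤ)*(M:ℤ) + (N.factorial:ℤ) + 2) := by
    rw [oagBumpN]; push_cast; ring
  apply oag_verify hE hb
  intro k c d hk1 hkN hc hd
  have hkabs : |k| = k := abs_of_pos (by omega)
  set c6 : Fin n → ℤ := fun i => k * c0 i + k0 * c i with hc6
  set d6 : ℤ := k * d0 + k0 * d with hd6
  have hA : zcomb c6 d6 v = k0 * (k * a + zcomb c d v) := by
    rw [hc6, hd6, zcomb_lincomb, ← heqz]; ring
  have hB : gcomb u c6 d6 w = k0 • (k • b + gcomb u c d w) := by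
    rw [hc6, hd6, gcomb_lincomb, ← heqg, smul_add, smul_smul, smul_smul, mul_comm k k0]
  have hbc : ∀ i, |c6 i| ≤ ((oagBumpN N M : ℕ):ℤ) := by
    intro i
    have h1 := hc0 i
    have h2 := hc i
    have t1 : (0:ℤ) ≤ |c0 i| := abs_nonneg _
    have t2 : (0:ℤ) ≤ |c i| := abs_nonneg _
    calc |c6 i| ≤ |k * c0 i| + |k0 * c i| := abs_add_le _ _
      _ = |k| * |c0 i| + |k0| * |c i| := by rw [abs_mul, abs_mul]
      _ ≤ (N:ℤ) * (N:ℤ) + (N:ℤ) * (N:ℤ) := by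
          rw [hkabs, abs_of_pos (by omega : (0:ℤ) < k0)]
          have hN0 : (0:ℤ) ≤ (N:ℤ) := Nat.cast_nonneg N
          nlinarith
      _ ≤ ((oagBumpN N M : ℕ):ℤ) := by
          apply oag_bumpN_ge hM
          have hN0 : (0:ℤ) ≤ (N:ℤ) := Nat.cast_nonneg N
          have hS0 : (0:ℤ) ≤ (N.factorial:ℤ)*(M:ℤ) + (N.factorial:ℤ) := by positivity
          nlinarith [mul_nonneg hN0 hS0]
  have hbd : |d6| ≤ ((oagBumpN N M : ℕ):ℤ) := by
    have t1 : (0:ℤ) ≤ |d0| := abs_nonneg _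
    have t2 : (0:ℤ) ≤ |d| := abs_nonneg _
    have hN0 : (0:ℤ) ≤ (N:ℤ) := Nat.cast_nonneg N
    calc |d6| ≤ |k * d0| + |k0 * d| := abs_add_le _ _
      _ = |k| * |d0| + |k0| * |d| := by rw [abs_mul, abs_mul]
      _ ≤ (N:ℤ) * ((N:ℤ) + ((N.factorial:ℤ) * M + (N.factorial:ℤ))) + (N:ℤ) * (N:ℤ) := by
          rw [hkabs, abs_of_pos (by omega : (0:ℤ) < k0)]
          nlinarith
      _ ≤ ((oagBumpN N M : ℕ):ℤ) := by
          apply oag_bumpN_ge hM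
          have hS0 : (0:ℤ) ≤ (N.factorial:ℤ)*(M:ℤ) + (N.factorial:ℤ) := by positivity
          linarith
  have hpos := hE.pos hbc hbd
  have hlt := hE.lt hbc hbd
  rw [hA, hB] at hpos hlt
  constructor
  · rw [← int_mul_pos_iff (y := k * a + zcomb c d v) (by omega : (0:ℤ) < k0),
      ← int_smul_pos_iff (x := k0) (by omega) (k • b + gcomb u c d w)]
    exact hpos
  · rw [← int_mul_neg_iff (y := k * a + zcomb c d v) (by omega : (0:ℤ) < k0),
      ← int_smul_neg_iff (x := k0) (by omega) (k • b + gcomb u c d w)]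
    exact hlt


set_option maxHeartbeats 2000000 in
/-- Back-and-forth, forward direction: any integer extension on the `ℤ` side can be
matched on the `G` side. -/
lemma oag_bf1 (hu0 : 0 < u) (humin : ∀ h : G, 0 < h → u ≤ h)
    (hdiv : ∀ m : ℤ, 0 < m → ∀ g : G, ∃ h z, 0 ≤ z ∧ z < m ∧ g = m • h + z • u)
    (hM : 0 < M) {v : Fin n → ℤ} {w : Fin n → G}
    (hE : OAGApprox u (oagBumpN N M) (oagBumpM N M) v w) (a : ℤ) :
    ∃ b : G, OAGApprox u N M (Fin.snoc v a) (Fin.snoc w b) := by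
  classical
  have hF1 : (1:ℤ) ≤ (N.factorial : ℤ) := by exact_mod_cast N.factorial_pos
  have hM1 : (1:ℤ) ≤ (M:ℤ) := by exact_mod_cast hM
  set F : ℤ := (N.factorial : ℤ) with hFdef
  set M2 : ℤ := F * M + F with hM2def
  set B2 : ℤ := (N:ℤ) + M2 with hB2def
  have hM2pos : 0 < M2 := by nlinarith
  have hNB : ((oagBumpN N M : ℕ):ℤ)
      = ((N:ℤ)+2)*((N:ℤ)+2)*((N:ℤ) + F*(M:ℤ) + F + 2) := by
    rw [oagBumpN]; push_cast; ring
  have hbumpMz : ((oagBumpM N M : ℕ) : ℤ) = F * M := by rw [oagBumpM]; push_cast; ring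
  by_cases hcase : ∃ k, ∃ c : Fin n → ℤ, ∃ d, 1 ≤ k ∧ k ≤ (N:ℤ) ∧
      (∀ i, |c i| ≤ (N:ℤ)) ∧ |d| ≤ B2 ∧ k * a = zcomb c d v
  · -- exact case: `a` satisfies a small linear equation; solve it in `G`
    obtain ⟨k0, c0, d0, hk01, hk0N, hc0, hd0, heqz⟩ := hcase
    obtain ⟨x0, hx0⟩ := hE.cong c0 d0
    obtain ⟨F', hF'⟩ := oag_k_dvd_factorial hk01 hk0N
    refine ⟨a • u + (F' * M) • x0, oag_exact_step hu0 hM hk01 hk0N hc0 hd0 hE heqz ?_ ?_⟩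
    · -- k0 • b = gcomb u c0 d0 w
      have h1 : gcomb u c0 d0 w = (zcomb c0 d0 v) • u + ((oagBumpM N M : ℕ):ℤ) • x0 := by
        rw [← hx0]; abel
      have e3 : k0 * (F' * (M:ℤ)) = F * (M:ℤ) := by rw [hFdef, hF']; ring
      rw [smul_add, ← mul_smul, ← mul_smul, h1, hbumpMz, ← heqz, e3]
    · refine ⟨F' • x0, ?_⟩
      have e4 : (F' * (M:ℤ)) • x0 = (M:ℤ) • F' • x0 := by rw [← mul_smul, mul_comm]
      rw [e4]
      abel
  · -- generic case: `a` is far from all small linear constraints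
    have hmargin : ∀ (k : ℤ) (c : Fin n → ℤ) (d : ℤ), 1 ≤ k → k ≤ (N:ℤ) →
        (∀ i, |c i| ≤ (N:ℤ)) → |d| ≤ (N:ℤ) → M2 < |k * a + zcomb c d v| := by
      intro k c d h1 h2 h3 h4
      by_contra hcon
      push_neg at hcon
      apply hcase
      refine ⟨k, fun i => -c i, -d + (k * a + zcomb c d v), h1, h2,
        fun i => by rw [abs_neg]; exact h3 i, ?_, ?_⟩
      · calc |(-d) + (k * a + zcomb c d v)| ≤ |(-d)| + |k * a + zcomb c d v| := abs_add_le _ _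
          _ ≤ (N:ℤ) + M2 := by rw [abs_neg]; exact add_le_add h4 hcon
      · rw [zcomb_addconst, zcomb_neg]; ring
    have hmarginJ : ∀ j ∈ oagJ n N, M2 < |oagZA a v j| := by
      intro j hj
      obtain ⟨h1, h2, h3, h4⟩ := mem_oagJ.1 hj
      exact hmargin j.1 j.2.1 j.2.2 h1 h2 h3 h4
    have hZAne : ∀ j ∈ oagJ n N, oagZA a v j ≠ 0 := by
      intro j hj h0
      have := hmarginJ j hj
      rw [h0, abs_zero] at this
      omega
    -- basic facts about the scaled quotients
    have hdvdJ : ∀ j ∈ oagJ n N, j.1 ∣ F := fun j hj =>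
      oag_k_dvd_factorial (mem_oagJ.1 hj).1 (mem_oagJ.1 hj).2.1
    have hq1 : ∀ j ∈ oagJ n N, 1 ≤ F / j.1 := by
      intro j hj
      have h := Int.ediv_mul_cancel (hdvdJ j hj)
      have h1 := (mem_oagJ.1 hj).1
      nlinarith [h]
    -- scaled margins on the ℤ side
    have hlow : ∀ j ∈ oagJ n N, 0 < oagZA a v j → M2 < F * a + oagZE F v j := by
      intro j hj hpos
      have hm := hmarginJ j hj
      rw [abs_of_pos hpos] at hm
      have hs := oagZE_spec (a := a) (v := v) (hdvdJ j hj) (mem_oagJ.1 hj).1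
      nlinarith [hq1 j hj, hs]
    have hupp : ∀ j ∈ oagJ n N, oagZA a v j < 0 → F * a + oagZE F v j < -M2 := by
      intro j hj hneg
      have hm := hmarginJ j hj
      rw [abs_of_neg hneg] at hm
      have hs := oagZE_spec (a := a) (v := v) (hdvdJ j hj) (mem_oagJ.1 hj).1
      nlinarith [hq1 j hj, hs]
    -- transfer of the gap to the G side
    have hgap : ∀ j1 ∈ oagJ n N, ∀ j2 ∈ oagJ n N, 0 < oagZA a v j1 → oagZA a v j2 < 0 →
        (2*M2) • u < oagGE F u w j1 - oagGE F u w j2 := by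
      intro j1 hj1 j2 hj2 hp hn
      have hq1a := hq1 j1 hj1
      have hq1b := hq1 j2 hj2
      have hqNa : F / j1.1 ≤ F := by
        have h := Int.ediv_mul_cancel (hdvdJ j1 hj1)
        have := (mem_oagJ.1 hj1).1
        nlinarith [h]
      have hqNb : F / j2.1 ≤ F := by
        have h := Int.ediv_mul_cancel (hdvdJ j2 hj2)
        have := (mem_oagJ.1 hj2).1
        nlinarith [h]
      set c5 : Fin n → ℤ := fun i => (F / j1.1) * j1.2.1 i + (-(F / j2.1)) * j2.2.1 i with hc5
      set d5 : ℤ := ((F / j1.1) * j1.2.2 + (-(F / j2.1)) * j2.2.2) + (-(2*M2)) with hd5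
      have hz5 : zcomb c5 d5 v = oagZE F v j1 - oagZE F v j2 - 2*M2 := by
        rw [hc5, hd5, zcomb_addconst, zcomb_lincomb, oagZE, oagZE]; ring
      have hg5 : gcomb u c5 d5 w = oagGE F u w j1 - oagGE F u w j2 - (2*M2) • u := by
        rw [hc5, hd5, gcomb_addconst, gcomb_lincomb, oagGE, oagGE, neg_smul, neg_smul]
        abel
      have hbound_c : ∀ i, |c5 i| ≤ ((oagBumpN N M : ℕ):ℤ) := by
        intro i
        have ha := (mem_oagJ.1 hj1).2.2.1 i
        have hb := (mem_oagJ.1 hj2).2.2.1 i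
        rw [hc5]
        calc |(F / j1.1) * j1.2.1 i + (-(F / j2.1)) * j2.2.1 i|
            ≤ |(F / j1.1) * j1.2.1 i| + |(-(F / j2.1)) * j2.2.1 i| := abs_add_le _ _
          _ = |F / j1.1| * |j1.2.1 i| + |F / j2.1| * |j2.2.1 i| := by
              rw [abs_mul, abs_mul, abs_neg]
          _ ≤ F * (N:ℤ) + F * (N:ℤ) := by
              have e1 : |F / j1.1| = F / j1.1 := abs_of_pos (by linarith [hq1a])
              have e2 : |F / j2.1| = F / j2.1 := abs_of_pos (by linarith [hq1b])
              rw [e1, e2]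
              have t1 : (0:ℤ) ≤ |j1.2.1 i| := abs_nonneg _
              have t2 : (0:ℤ) ≤ |j2.2.1 i| := abs_nonneg _
              nlinarith
          _ ≤ ((oagBumpN N M : ℕ):ℤ) := by
              apply oag_bumpN_ge hM
              have hN0 : (0:ℤ) ≤ (N:ℤ) := Nat.cast_nonneg N
              have hFM : F ≤ F * (M:ℤ) := le_mul_of_one_le_right (by linarith) hM1
              have h2F : 2*F ≤ F*(M:ℤ) + F := by linarith
              have := mul_le_mul_of_nonneg_right h2F hN0
              have hS0 : (0:ℤ) ≤ F*(M:ℤ) + F := by linarith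
              have := mul_nonneg hN0 hS0
              rw [hFdef] at *
              nlinarith [mul_nonneg hN0 hN0]
      have hbound_d : |d5| ≤ ((oagBumpN N M : ℕ):ℤ) := by
        have ha := (mem_oagJ.1 hj1).2.2.2
        have hb := (mem_oagJ.1 hj2).2.2.2
        rw [hd5]
        calc |((F / j1.1) * j1.2.2 + (-(F / j2.1)) * j2.2.2) + (-(2*M2))|
            ≤ |(F / j1.1) * j1.2.2| + |(-(F / j2.1)) * j2.2.2| + |(-(2*M2))| := by
              refine (abs_add_le _ _).trans (add_le_add_left (abs_add_le _ _) _)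
          _ = |F / j1.1| * |j1.2.2| + |F / j2.1| * |j2.2.2| + 2*M2 := by
              rw [abs_mul, abs_mul, abs_neg, abs_neg, abs_of_pos (by linarith : (0:ℤ) < 2*M2)]
          _ ≤ F * (N:ℤ) + F * (N:ℤ) + 2*M2 := by
              have e1 : |F / j1.1| = F / j1.1 := abs_of_pos (by linarith [hq1a])
              have e2 : |F / j2.1| = F / j2.1 := abs_of_pos (by linarith [hq1b])
              rw [e1, e2]
              have t1 : (0:ℤ) ≤ |j1.2.2| := abs_nonneg _
              have t2 : (0:ℤ) ≤ |j2.2.2| := abs_nonneg _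
              nlinarith
          _ ≤ ((oagBumpN N M : ℕ):ℤ) := by
              apply oag_bumpN_ge hM
              have hN0 : (0:ℤ) ≤ (N:ℤ) := Nat.cast_nonneg N
              have hFM : F ≤ F * (M:ℤ) := le_mul_of_one_le_right (by linarith) hM1
              have h2F : 2*F ≤ F*(M:ℤ) + F := by linarith
              have := mul_le_mul_of_nonneg_right h2F hN0
              have hS0 : (0:ℤ) ≤ F*(M:ℤ) + F := by linarith
              have := mul_nonneg hN0 hS0
              rw [hM2def, hFdef] at *
              nlinarith [mul_nonneg hN0 hN0]
      have hzpos : 0 < zcomb c5 d5 v := by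
        rw [hz5]
        have := hlow j1 hj1 hp
        have := hupp j2 hj2 hn
        linarith
      have hgpos := (hE.pos hbound_c hbound_d).1 hzpos
      rw [hg5] at hgpos
      exact sub_pos.1 hgpos
  -- choose b according to which constraints are present
    set Lf : Finset (ℤ × (Fin n → ℤ) × ℤ) :=
      (oagJ n N).filter (fun j => 0 < oagZA a v j) with hLf
    set Uf : Finset (ℤ × (Fin n → ℤ) × ℤ) :=
      (oagJ n N).filter (fun j => oagZA a v j < 0) with hUf
    have main : ∃ b : G, (∃ x : G, b - a • u = (M:ℤ) • x) ∧
        (∀ j ∈ oagJ n N, (0 < oagZA a v j → 0 < oagGB u b w j) ∧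
          (oagZA a v j < 0 → oagGB u b w j < 0)) := by
      by_cases hL : Lf.Nonempty
      · obtain ⟨b, hbcong, hb1, hb2⟩ := oag_window_above hu0 hdiv
          (P := F) (Mz := ((M:ℤ))) (by omega) (by omega)
          (Lf.sup' hL (fun j => -oagGE F u w j)) a
        refine ⟨b, hbcong, fun j hj => ⟨?_, ?_⟩⟩
        · intro hpos
          have hjL : j ∈ Lf := Finset.mem_filter.2 ⟨hj, hpos⟩
          have h1 : -oagGE F u w j ≤ Lf.sup' hL (fun j => -oagGE F u w j) :=
            Finset.le_sup' (fun j => -oagGE F u w j) hjL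
          have h2 : -oagGE F u w j < F • b := lt_of_le_of_lt h1 hb1
          have h3 : 0 < F • b + oagGE F u w j := by
            have := add_lt_add_left h2 (oagGE F u w j)
            rwa [neg_add_cancel] at this
          rw [← oagGE_spec (u := u) (b := b) (hdvdJ j hj)] at h3
          exact (int_smul_pos_iff (by linarith [hq1 j hj]) _).1 h3
        · intro hneg
          obtain ⟨j1, hj1L, hg1⟩ := Finset.exists_mem_eq_sup' hL (fun j => -oagGE F u w j)
          have hj1J : j1 ∈ oagJ n N := (Finset.mem_filter.1 hj1L).1
          have hj1pos : 0 < oagZA a v j1 := (Finset.mem_filter.1 hj1L).2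
          have hgp := hgap j1 hj1J j hj hj1pos hneg
          have hchain : F • b < -oagGE F u w j := by
            calc F • b ≤ Lf.sup' hL (fun j => -oagGE F u w j) + (F * M) • u := hb2
              _ = -oagGE F u w j1 + (F * M) • u := by rw [hg1]
              _ < -oagGE F u w j1 + (2*M2) • u := by
                  exact add_lt_add_right (zsmul_lt_zsmul_left hu0 (by nlinarith)) _
              _ < -oagGE F u w j1 + (oagGE F u w j1 - oagGE F u w j) :=
                  add_lt_add_right hgp _
              _ = -oagGE F u w j := by abel
          have h3 : F • b + oagGE F u w j < 0 := by
            have := add_lt_add_left hchain (oagGE F u w j)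
            rwa [neg_add_cancel] at this
          rw [← oagGE_spec (u := u) (b := b) (hdvdJ j hj)] at h3
          exact (int_smul_neg_iff (by linarith [hq1 j hj]) _).1 h3
      · by_cases hU : Uf.Nonempty
        · obtain ⟨b, hbcong, hb1⟩ := oag_window_below hu0 hdiv
            (P := F) (Mz := ((M:ℤ))) (by omega) (by omega)
            (Uf.inf' hU (fun j => -oagGE F u w j)) a
          refine ⟨b, hbcong, fun j hj => ⟨?_, ?_⟩⟩
          · intro hpos
            exact absurd ⟨j, Finset.mem_filter.2 ⟨hj, hpos⟩⟩ hL
          · intro hneg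
            have hjU : j ∈ Uf := Finset.mem_filter.2 ⟨hj, hneg⟩
            have h1 : Uf.inf' hU (fun j => -oagGE F u w j) ≤ -oagGE F u w j :=
              Finset.inf'_le (fun j => -oagGE F u w j) hjU
            have h2 : F • b < -oagGE F u w j := lt_of_lt_of_le hb1 h1
            have h3 : F • b + oagGE F u w j < 0 := by
              have := add_lt_add_left h2 (oagGE F u w j)
              rwa [neg_add_cancel] at this
            rw [← oagGE_spec (u := u) (b := b) (hdvdJ j hj)] at h3
            exact (int_smul_neg_iff (by linarith [hq1 j hj]) _).1 h3
        · refine ⟨a • u, ⟨0, by simp⟩, fun j hj => ⟨?_, ?_⟩⟩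
          · intro hpos
            exact absurd ⟨j, Finset.mem_filter.2 ⟨hj, hpos⟩⟩ hL
          · intro hneg
            exact absurd ⟨j, Finset.mem_filter.2 ⟨hj, hneg⟩⟩ hU
    obtain ⟨b, hbcong, W⟩ := main
    refine ⟨b, oag_verify hE hbcong ?_⟩
    intro k c d h1 h2 h3 h4
    have hjJ : (k, c, d) ∈ oagJ n N := mem_oagJ.2 ⟨h1, h2, h3, h4⟩
    have hne := hZAne _ hjJ
    have hW := W _ hjJ
    constructor
    · constructor
      · intro hx
        exact hW.1 hx
      · intro hx
        rcases lt_trichotomy (oagZA a v (k, c, d)) 0 with h' | h' | h'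
        · exact absurd (hW.2 h') (not_lt.2 hx.le)
        · exact absurd h' hne
        · exact h'
    · constructor
      · intro hx
        exact hW.2 hx
      · intro hx
        rcases lt_trichotomy (oagZA a v (k, c, d)) 0 with h' | h' | h'
        · exact h'
        · exact absurd h' hne
        · exact absurd (hW.1 h') (not_lt.2 hx.le)

set_option maxHeartbeats 2000000 in
/-- Back-and-forth, backward direction: any extension on the `G` side can be matched
by an integer. -/
lemma oag_bf2 (hu0 : 0 < u) (humin : ∀ h : G, 0 < h → u ≤ h)
    (hdiv : ∀ m : ℤ, 0 < m → ∀ g : G, ∃ h z, 0 ≤ z ∧ z < m ∧ g = m • h + z • u)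
    (hM : 0 < M) {v : Fin n → ℤ} {w : Fin n → G}
    (hE : OAGApprox u (oagBumpN N M) (oagBumpM N M) v w) (b : G) :
    ∃ a : ℤ, OAGApprox u N M (Fin.snoc v a) (Fin.snoc w b) := by
  classical
  have hF1 : (1:ℤ) ≤ (N.factorial : ℤ) := by exact_mod_cast N.factorial_pos
  have hM1 : (1:ℤ) ≤ (M:ℤ) := by exact_mod_cast hM
  set F : ℤ := (N.factorial : ℤ) with hFdef
  set M2 : ℤ := F * M + F with hM2def
  set B2 : ℤ := (N:ℤ) + M2 with hB2def
  have hM2pos : 0 < M2 := by nlinarith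
  have hbumpMz : ((oagBumpM N M : ℕ) : ℤ) = F * M := by rw [oagBumpM]; push_cast; ring
  by_cases hcase : ∃ k, ∃ c : Fin n → ℤ, ∃ d, 1 ≤ k ∧ k ≤ (N:ℤ) ∧
      (∀ i, |c i| ≤ (N:ℤ)) ∧ |d| ≤ B2 ∧ k • b = gcomb u c d w
  · obtain ⟨k0, c0, d0, hk01, hk0N, hc0, hd0, heqg⟩ := hcase
    obtain ⟨x0, hx0⟩ := hE.cong c0 d0
    obtain ⟨F', hF'⟩ := oag_k_dvd_factorial hk01 hk0N
    have h1 : gcomb u c0 d0 w = (zcomb c0 d0 v) • u + ((oagBumpM N M : ℕ):ℤ) • x0 := by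
      rw [← hx0]; abel
    have e3 : ((oagBumpM N M : ℕ):ℤ) = k0 * (F' * (M:ℤ)) := by
      rw [hbumpMz, hFdef, hF']; ring
    have hzu : (zcomb c0 d0 v) • u = k0 • (b - (F' * (M:ℤ)) • x0) := by
      rw [smul_sub, ← mul_smul, ← e3, heqg, h1]
      abel
    obtain ⟨a, ha⟩ := oag_udvd hu0 humin (by omega : (0:ℤ) < k0)
      ⟨b - (F' * (M:ℤ)) • x0, hzu⟩
    have heqz : k0 * a = zcomb c0 d0 v := ha.symm
    have hbcong : ∃ x : G, b - a • u = (M:ℤ) • x := by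
      refine ⟨F' • x0, ?_⟩
      have l1 : (k0 * a) • u = k0 • b - k0 • ((F' * (M:ℤ)) • x0) := by
        rw [heqz, hzu, smul_sub]
      have hcancel : k0 • (b - a • u) = k0 • ((M:ℤ) • F' • x0) := by
        calc k0 • (b - a • u) = k0 • b - (k0 * a) • u := by rw [smul_sub, mul_smul]
          _ = k0 • ((F' * (M:ℤ)) • x0) := by rw [l1]; abel
          _ = k0 • ((M:ℤ) • F' • x0) := by
              rw [smul_smul, smul_smul, smul_smul]
              congr 1
              ring
      exact zsmul_right_injective (by omega : k0 ≠ 0) hcancel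
    exact ⟨a, oag_exact_step hu0 hM hk01 hk0N hc0 hd0 hE heqz heqg hbcong⟩
  · -- generic case: `b` is far from all small linear constraints
    have hmargin : ∀ (k : ℤ) (c : Fin n → ℤ) (d : ℤ), 1 ≤ k → k ≤ (N:ℤ) →
        (∀ i, |c i| ≤ (N:ℤ)) → |d| ≤ (N:ℤ) → M2 • u < |k • b + gcomb u c d w| := by
      intro k c d h1 h2 h3 h4
      by_contra hcon
      push_neg at hcon
      obtain ⟨habs1, habs2⟩ := abs_le.1 hcon
      obtain ⟨t, ht, hteq⟩ := oag_mult_of_bounded hu0 humin habs1 habs2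
      apply hcase
      refine ⟨k, fun i => -c i, -d + t, h1, h2,
        fun i => by rw [abs_neg]; exact h3 i, ?_, ?_⟩
      · calc |(-d) + t| ≤ |(-d)| + |t| := abs_add_le _ _
          _ ≤ (N:ℤ) + M2 := by rw [abs_neg]; exact add_le_add h4 ht
      · rw [gcomb_addconst, gcomb_neg, ← hteq]
        abel
    have hmarginJ : ∀ j ∈ oagJ n N, M2 • u < |oagGB u b w j| := by
      intro j hj
      obtain ⟨h1, h2, h3, h4⟩ := mem_oagJ.1 hj
      exact hmargin j.1 j.2.1 j.2.2 h1 h2 h3 h4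
    have hGBne : ∀ j ∈ oagJ n N, oagGB u b w j ≠ 0 := by
      intro j hj h0
      have := hmarginJ j hj
      rw [h0, abs_zero] at this
      exact absurd this (not_lt.2 (zsmul_pos hu0 hM2pos).le)
    have hdvdJ : ∀ j ∈ oagJ n N, j.1 ∣ F := fun j hj =>
      oag_k_dvd_factorial (mem_oagJ.1 hj).1 (mem_oagJ.1 hj).2.1
    have hq1 : ∀ j ∈ oagJ n N, 1 ≤ F / j.1 := by
      intro j hj
      have h := Int.ediv_mul_cancel (hdvdJ j hj)
      have h1 := (mem_oagJ.1 hj).1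
      nlinarith [h]
    have hlow : ∀ j ∈ oagJ n N, 0 < oagGB u b w j → M2 • u < F • b + oagGE F u w j := by
      intro j hj hpos
      have hm := hmarginJ j hj
      rw [abs_of_pos hpos] at hm
      have hs := oagGE_spec (u := u) (b := b) (w := w) (hdvdJ j hj)
      have hle : oagGB u b w j ≤ (F / j.1) • oagGB u b w j := by
        have h0 : (1:ℤ) • oagGB u b w j ≤ (F / j.1) • oagGB u b w j :=
          zsmul_le_zsmul_left hpos.le (hq1 j hj)
        rwa [one_smul] at h0
      rw [hs] at hle
      exact lt_of_lt_of_le hm hle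
    have hupp : ∀ j ∈ oagJ n N, oagGB u b w j < 0 →
        F • b + oagGE F u w j < -(M2 • u) := by
      intro j hj hneg
      have hm := hmarginJ j hj
      rw [abs_of_neg hneg] at hm
      have hs := oagGE_spec (u := u) (b := b) (w := w) (hdvdJ j hj)
      have h0 : (1:ℤ) • (-oagGB u b w j) ≤ (F / j.1) • (-oagGB u b w j) :=
        zsmul_le_zsmul_left (neg_nonneg.2 hneg.le) (hq1 j hj)
      rw [one_smul, smul_neg] at h0
      have h2 : (F / j.1) • oagGB u b w j ≤ oagGB u b w j := le_of_neg_le_neg h0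
      rw [hs] at h2
      have hm' : oagGB u b w j < -(M2 • u) := by
        have h5 := neg_lt_neg hm
        rwa [neg_neg] at h5
      exact lt_of_le_of_lt h2 hm'
    have hgap : ∀ j1 ∈ oagJ n N, ∀ j2 ∈ oagJ n N, 0 < oagGB u b w j1 →
        oagGB u b w j2 < 0 → 2*M2 < oagZE F v j1 - oagZE F v j2 := by
      intro j1 hj1 j2 hj2 hp hn
      have hq1a := hq1 j1 hj1
      have hq1b := hq1 j2 hj2
      have hqNa : F / j1.1 ≤ F := by
        have h := Int.ediv_mul_cancel (hdvdJ j1 hj1)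
        have := (mem_oagJ.1 hj1).1
        nlinarith [h]
      have hqNb : F / j2.1 ≤ F := by
        have h := Int.ediv_mul_cancel (hdvdJ j2 hj2)
        have := (mem_oagJ.1 hj2).1
        nlinarith [h]
      set c5 : Fin n → ℤ := fun i => (F / j1.1) * j1.2.1 i + (-(F / j2.1)) * j2.2.1 i with hc5
      set d5 : ℤ := ((F / j1.1) * j1.2.2 + (-(F / j2.1)) * j2.2.2) + (-(2*M2)) with hd5
      have hz5 : zcomb c5 d5 v = oagZE F v j1 - oagZE F v j2 - 2*M2 := by
        rw [hc5, hd5, zcomb_addconst, zcomb_lincomb, oagZE, oagZE]; ring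
      have hg5 : gcomb u c5 d5 w = oagGE F u w j1 - oagGE F u w j2 - (2*M2) • u := by
        rw [hc5, hd5, gcomb_addconst, gcomb_lincomb, oagGE, oagGE, neg_smul, neg_smul]
        abel
      have hbound_c : ∀ i, |c5 i| ≤ ((oagBumpN N M : ℕ):ℤ) := by
        intro i
        have ha := (mem_oagJ.1 hj1).2.2.1 i
        have hb := (mem_oagJ.1 hj2).2.2.1 i
        rw [hc5]
        calc |(F / j1.1) * j1.2.1 i + (-(F / j2.1)) * j2.2.1 i|
            ≤ |(F / j1.1) * j1.2.1 i| + |(-(F / j2.1)) * j2.2.1 i| := abs_add_le _ _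
          _ = |F / j1.1| * |j1.2.1 i| + |F / j2.1| * |j2.2.1 i| := by
              rw [abs_mul, abs_mul, abs_neg]
          _ ≤ F * (N:ℤ) + F * (N:ℤ) := by
              have e1 : |F / j1.1| = F / j1.1 := abs_of_pos (by linarith [hq1a])
              have e2 : |F / j2.1| = F / j2.1 := abs_of_pos (by linarith [hq1b])
              rw [e1, e2]
              have t1 : (0:ℤ) ≤ |j1.2.1 i| := abs_nonneg _
              have t2 : (0:ℤ) ≤ |j2.2.1 i| := abs_nonneg _
              nlinarith
          _ ≤ ((oagBumpN N M : ℕ):ℤ) := by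
              apply oag_bumpN_ge hM
              have hN0 : (0:ℤ) ≤ (N:ℤ) := Nat.cast_nonneg N
              have hFM : F ≤ F * (M:ℤ) := le_mul_of_one_le_right (by linarith) hM1
              have h2F : 2*F ≤ F*(M:ℤ) + F := by linarith
              have := mul_le_mul_of_nonneg_right h2F hN0
              have hS0 : (0:ℤ) ≤ F*(M:ℤ) + F := by linarith
              have := mul_nonneg hN0 hS0
              rw [hFdef] at *
              nlinarith [mul_nonneg hN0 hN0]
      have hbound_d : |d5| ≤ ((oagBumpN N M : ℕ):ℤ) := by
        have ha := (mem_oagJ.1 hj1).2.2.2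
        have hb := (mem_oagJ.1 hj2).2.2.2
        rw [hd5]
        calc |((F / j1.1) * j1.2.2 + (-(F / j2.1)) * j2.2.2) + (-(2*M2))|
            ≤ |(F / j1.1) * j1.2.2| + |(-(F / j2.1)) * j2.2.2| + |(-(2*M2))| := by
              refine (abs_add_le _ _).trans (add_le_add_left (abs_add_le _ _) _)
          _ = |F / j1.1| * |j1.2.2| + |F / j2.1| * |j2.2.2| + 2*M2 := by
              rw [abs_mul, abs_mul, abs_neg, abs_neg, abs_of_pos (by linarith : (0:ℤ) < 2*M2)]
          _ ≤ F * (N:ℤ) + F * (N:ℤ) + 2*M2 := by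
              have e1 : |F / j1.1| = F / j1.1 := abs_of_pos (by linarith [hq1a])
              have e2 : |F / j2.1| = F / j2.1 := abs_of_pos (by linarith [hq1b])
              rw [e1, e2]
              have t1 : (0:ℤ) ≤ |j1.2.2| := abs_nonneg _
              have t2 : (0:ℤ) ≤ |j2.2.2| := abs_nonneg _
              nlinarith
          _ ≤ ((oagBumpN N M : ℕ):ℤ) := by
              apply oag_bumpN_ge hM
              have hN0 : (0:ℤ) ≤ (N:ℤ) := Nat.cast_nonneg N
              have hFM : F ≤ F * (M:ℤ) := le_mul_of_one_le_right (by linarith) hM1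
              have h2F : 2*F ≤ F*(M:ℤ) + F := by linarith
              have := mul_le_mul_of_nonneg_right h2F hN0
              have hS0 : (0:ℤ) ≤ F*(M:ℤ) + F := by linarith
              have := mul_nonneg hN0 hS0
              rw [hM2def, hFdef] at *
              nlinarith [mul_nonneg hN0 hN0]
      have t1 := hlow j1 hj1 hp
      have t2 := hupp j2 hj2 hn
      have t3 := add_lt_add t1 t2
      have t4 : M2 • u + M2 • u < oagGE F u w j1 - oagGE F u w j2 := by
        calc M2 • u + M2 • u
            = (M2 • u + (F • b + oagGE F u w j2))
              + (M2 • u - (F • b + oagGE F u w j2)) := by abel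
          _ < ((F • b + oagGE F u w j1) + (-(M2 • u)))
              + (M2 • u - (F • b + oagGE F u w j2)) := add_lt_add_left t3 _
          _ = oagGE F u w j1 - oagGE F u w j2 := by abel
      have t5 : (2*M2) • u < oagGE F u w j1 - oagGE F u w j2 := by
        rw [two_mul, add_smul]; exact t4
      have hgpos : 0 < gcomb u c5 d5 w := by rw [hg5]; exact sub_pos.2 t5
      have hzpos := (hE.pos hbound_c hbound_d).2 hgpos
      rw [hz5] at hzpos
      linarith
    obtain ⟨hb0, r, hr0, hrM, hbdecomp⟩ := hdiv ((M:ℤ)) (by omega) b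
    set Lf : Finset (ℤ × (Fin n → ℤ) × ℤ) :=
      (oagJ n N).filter (fun j => 0 < oagGB u b w j) with hLf
    set Uf : Finset (ℤ × (Fin n → ℤ) × ℤ) :=
      (oagJ n N).filter (fun j => oagGB u b w j < 0) with hUf
    have hcongr : ∀ t : ℤ, ∃ x : G, b - (r + (M:ℤ)*t) • u = (M:ℤ) • x := by
      intro t
      refine ⟨hb0 - t • u, ?_⟩
      rw [hbdecomp, add_smul, mul_smul, smul_sub]
      abel
    have hFM0 : (0:ℤ) < F * M := by nlinarith
    have main : ∃ a : ℤ, (∃ x : G, b - a • u = (M:ℤ) • x) ∧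
        (∀ j ∈ oagJ n N, (0 < oagGB u b w j → 0 < oagZA a v j) ∧
          (oagGB u b w j < 0 → oagZA a v j < 0)) := by
      by_cases hL : Lf.Nonempty
      · set g1 : ℤ := Lf.sup' hL (fun j => -oagZE F v j) with hg1def
        set q : ℤ := (g1 - F*r) / (F*(M:ℤ)) with hqdef
        set a : ℤ := r + (M:ℤ)*(q+1) with hadef
        have hediv := Int.mul_ediv_add_emod (g1 - F*r) (F*(M:ℤ))
        have hmod0 := Int.emod_nonneg (g1 - F*r) (ne_of_gt hFM0)
        have hmodlt := Int.emod_lt_of_pos (g1 - F*r) hFM0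
        have hFa : F * a = g1 - (g1 - F*r) % (F*(M:ℤ)) + F*(M:ℤ) := by
          rw [hadef, hqdef]; linear_combination hediv
        have hpos1 : g1 < F * a := by rw [hFa]; linarith
        have hpos2 : F * a ≤ g1 + F*(M:ℤ) := by rw [hFa]; linarith
        refine ⟨a, hcongr (q+1), fun j hj => ⟨?_, ?_⟩⟩
        · intro hpos
          have hjL : j ∈ Lf := Finset.mem_filter.2 ⟨hj, hpos⟩
          have h1 : -oagZE F v j ≤ g1 := Finset.le_sup' (fun j => -oagZE F v j) hjL
          have h3 : 0 < F * a + oagZE F v j := by linarith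
          rw [← oagZE_spec (a := a) (v := v) (hdvdJ j hj) (mem_oagJ.1 hj).1] at h3
          exact (int_mul_pos_iff (by linarith [hq1 j hj])).1 h3
        · intro hneg
          obtain ⟨j1, hj1L, hg1e⟩ := Finset.exists_mem_eq_sup' hL (fun j => -oagZE F v j)
          have hj1J : j1 ∈ oagJ n N := (Finset.mem_filter.1 hj1L).1
          have hj1pos : 0 < oagGB u b w j1 := (Finset.mem_filter.1 hj1L).2
          have hgp := hgap j1 hj1J j hj hj1pos hneg
          have h3 : F * a + oagZE F v j < 0 := by
            have e1 : g1 = -oagZE F v j1 := hg1e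
            linarith [hpos2, hgp, hFM0, hF1, hM1]
          rw [← oagZE_spec (a := a) (v := v) (hdvdJ j hj) (mem_oagJ.1 hj).1] at h3
          exact (int_mul_neg_iff (by linarith [hq1 j hj])).1 h3
      · by_cases hU : Uf.Nonempty
        · set g2 : ℤ := Uf.inf' hU (fun j => -oagZE F v j) with hg2def
          set q : ℤ := (g2 - F*r) / (F*(M:ℤ)) with hqdef
          set a : ℤ := r + (M:ℤ)*(q-1) with hadef
          have hediv := Int.mul_ediv_add_emod (g2 - F*r) (F*(M:ℤ))
          have hmod0 := Int.emod_nonneg (g2 - F*r) (ne_of_gt hFM0)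
          have hFa : F * a = g2 - (g2 - F*r) % (F*(M:ℤ)) - F*(M:ℤ) := by
            rw [hadef, hqdef]; linear_combination hediv
          have hneg1 : F * a < g2 := by rw [hFa]; linarith
          refine ⟨a, hcongr (q-1), fun j hj => ⟨?_, ?_⟩⟩
          · intro hpos
            exact absurd ⟨j, Finset.mem_filter.2 ⟨hj, hpos⟩⟩ hL
          · intro hneg
            have hjU : j ∈ Uf := Finset.mem_filter.2 ⟨hj, hneg⟩
            have h1 : g2 ≤ -oagZE F v j := Finset.inf'_le (fun j => -oagZE F v j) hjU
            have h3 : F * a + oagZE F v j < 0 := by linarith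
            rw [← oagZE_spec (a := a) (v := v) (hdvdJ j hj) (mem_oagJ.1 hj).1] at h3
            exact (int_mul_neg_iff (by linarith [hq1 j hj])).1 h3
        · refine ⟨r + (M:ℤ)*0, hcongr 0, fun j hj => ⟨?_, ?_⟩⟩
          · intro hpos
            exact absurd ⟨j, Finset.mem_filter.2 ⟨hj, hpos⟩⟩ hL
          · intro hneg
            exact absurd ⟨j, Finset.mem_filter.2 ⟨hj, hneg⟩⟩ hU
    obtain ⟨a, hbcong, W⟩ := main
    refine ⟨a, oag_verify hE hbcong ?_⟩
    intro k c d h1 h2 h3 h4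
    have hjJ : (k, c, d) ∈ oagJ n N := mem_oagJ.2 ⟨h1, h2, h3, h4⟩
    have hne := hGBne _ hjJ
    have hW := W _ hjJ
    constructor
    · constructor
      · intro hx
        rcases lt_trichotomy (oagGB u b w (k, c, d)) 0 with h' | h' | h'
        · exact absurd (hW.2 h') (not_lt.2 hx.le)
        · exact absurd h' hne
        · exact h'
      · exact fun hx => hW.1 hx
    · constructor
      · intro hx
        rcases lt_trichotomy (oagGB u b w (k, c, d)) 0 with h' | h' | h'
        · exact h'
        · exact absurd h' hne
        · exact absurd (hW.1 h') (not_lt.2 hx.le)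
      · exact fun hx => hW.2 hx

end E
section F
variable {G : Type*} [AddCommGroup G] [LinearOrder G] [IsOrderedAddMonoid G] {u : G} {n : ℕ}

/-- Every term of the language of ordered abelian groups is a linear combination of the
variables, uniformly in the structure. -/
lemma oag_term_linear (t : oagLang.Term (Empty ⊕ Fin n)) :
    ∃ c : Fin n → ℤ,
      (∀ v : Fin n → ℤ, t.realize (Sum.elim (fun x => x.elim) v) = ∑ i, c i * v i) ∧
      (∀ w : Fin n → G, t.realize (Sum.elim (fun x => x.elim) w) = ∑ i, c i • w i) := by
  induction t with
  | var x =>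
    cases x with
    | inl e => exact e.elim
    | inr i =>
      refine ⟨fun j => if j = i then 1 else 0, fun v => ?_, fun w => ?_⟩
      · simp [Language.Term.realize, ite_mul]
      · simp [Language.Term.realize, ite_smul]
  | @func l f ts ih =>
    rcases l with _ | _ | _ | l
    · cases f
      refine ⟨fun _ => 0, fun v => ?_, fun w => ?_⟩
      · simp [Language.Term.realize]
        rfl
      · simp [Language.Term.realize]
        rfl
    · cases f
      obtain ⟨c, hz, hg⟩ := ih 0
      refine ⟨fun i => -(c i), fun v => ?_, fun w => ?_⟩
      · have : (Language.Term.func () ts).realize (Sum.elim (fun x => x.elim) v)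
            = -((ts 0).realize (Sum.elim (fun x => x.elim) v)) := rfl
        rw [this, hz]
        simp [neg_mul, Finset.sum_neg_distrib]
      · have : (Language.Term.func () ts).realize (Sum.elim (fun x => x.elim) w)
            = -((ts 0).realize (Sum.elim (fun x => x.elim) w)) := rfl
        rw [this, hg]
        simp [neg_smul, Finset.sum_neg_distrib]
    · cases f
      obtain ⟨c1, hz1, hg1⟩ := ih 0
      obtain ⟨c2, hz2, hg2⟩ := ih 1
      refine ⟨fun i => c1 i + c2 i, fun v => ?_, fun w => ?_⟩
      · have : (Language.Term.func () ts).realize (Sum.elim (fun x => x.elim) v)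
            = (ts 0).realize (Sum.elim (fun x => x.elim) v)
              + (ts 1).realize (Sum.elim (fun x => x.elim) v) := rfl
        rw [this, hz1, hz2]
        simp [add_mul, Finset.sum_add_distrib]
      · have : (Language.Term.func () ts).realize (Sum.elim (fun x => x.elim) w)
            = (ts 0).realize (Sum.elim (fun x => x.elim) w)
              + (ts 1).realize (Sum.elim (fun x => x.elim) w) := rfl
        rw [this, hg1, hg2]
        simp [add_smul, Finset.sum_add_distrib]
    · exact Empty.elim f

set_option maxHeartbeats 1000000 in
/-- Main transfer: every first-order formula is invariant under sufficiently precise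
approximations between tuples of `ℤ` and of `G`. -/
lemma oag_formula_transfer (hu0 : 0 < u) (humin : ∀ h : G, 0 < h → u ≤ h)
    (hdiv : ∀ m : ℤ, 0 < m → ∀ g : G, ∃ h z, 0 ≤ z ∧ z < m ∧ g = m • h + z • u)
    {n : ℕ} (φ : oagLang.BoundedFormula Empty n) :
    ∃ N M : ℕ, 0 < M ∧ ∀ (v : Fin n → ℤ) (w : Fin n → G), OAGApprox u N M v w →
      (φ.Realize (fun x => x.elim) v ↔ φ.Realize (fun x => x.elim) w) := by
  induction φ with
  | falsum =>
    exact ⟨1, 1, one_pos, fun v w _ => by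
      simp [Language.BoundedFormula.Realize]⟩
  | equal t₁ t₂ =>
    obtain ⟨c₁, hz₁, hg₁⟩ := oag_term_linear (G := G) t₁
    obtain ⟨c₂, hz₂, hg₂⟩ := oag_term_linear (G := G) t₂
    refine ⟨Finset.univ.sup fun i => (c₁ i - c₂ i).natAbs, 1, one_pos, fun v w hE => ?_⟩
    have hbound : ∀ i, |c₁ i - c₂ i|
        ≤ ((Finset.univ.sup fun i => (c₁ i - c₂ i).natAbs : ℕ):ℤ) := by
      intro i
      have h := Finset.le_sup (f := fun i => (c₁ i - c₂ i).natAbs) (Finset.mem_univ i)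
      rw [Int.abs_eq_natAbs]
      exact_mod_cast h
    have h := hE.eq (c := fun i => c₁ i - c₂ i) (d := 0) hbound (by simp)
    have e1 : zcomb (fun i => c₁ i - c₂ i) 0 v
        = (∑ i, c₁ i * v i) - (∑ i, c₂ i * v i) := by
      simp [zcomb, sub_mul, Finset.sum_sub_distrib]
    have e2 : gcomb u (fun i => c₁ i - c₂ i) 0 w
        = (∑ i, c₁ i • w i) - (∑ i, c₂ i • w i) := by
      simp [gcomb, sub_smul, Finset.sum_sub_distrib]
    rw [e1, e2, sub_eq_zero, sub_eq_zero] at h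
    show (t₁.realize (Sum.elim (fun x => x.elim) v) = t₂.realize (Sum.elim (fun x => x.elim) v))
      ↔ (t₁.realize (Sum.elim (fun x => x.elim) w) = t₂.realize (Sum.elim (fun x => x.elim) w))
    rw [hz₁, hz₂, hg₁, hg₂]
    exact h
  | @rel m l R ts =>
    rcases l with _ | _ | _ | l
    · exact R.elim
    · exact R.elim
    · cases R
      obtain ⟨c₁, hz₁, hg₁⟩ := oag_term_linear (G := G) (ts 0)
      obtain ⟨c₂, hz₂, hg₂⟩ := oag_term_linear (G := G) (ts 1)
      refine ⟨Finset.univ.sup fun i => (c₁ i - c₂ i).natAbs, 1, one_pos, fun v w hE => ?_⟩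
      have hbound : ∀ i, |c₁ i - c₂ i|
          ≤ ((Finset.univ.sup fun i => (c₁ i - c₂ i).natAbs : ℕ):ℤ) := by
        intro i
        have h := Finset.le_sup (f := fun i => (c₁ i - c₂ i).natAbs) (Finset.mem_univ i)
        rw [Int.abs_eq_natAbs]
        exact_mod_cast h
      have h := hE.le (c := fun i => c₁ i - c₂ i) (d := 0) hbound (by simp)
      have e1 : zcomb (fun i => c₁ i - c₂ i) 0 v
          = (∑ i, c₁ i * v i) - (∑ i, c₂ i * v i) := by
        simp [zcomb, sub_mul, Finset.sum_sub_distrib]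
      have e2 : gcomb u (fun i => c₁ i - c₂ i) 0 w
          = (∑ i, c₁ i • w i) - (∑ i, c₂ i • w i) := by
        simp [gcomb, sub_smul, Finset.sum_sub_distrib]
      rw [e1, e2, sub_nonpos, sub_nonpos] at h
      show ((ts 0).realize (Sum.elim (fun x => x.elim) v)
          ≤ (ts 1).realize (Sum.elim (fun x => x.elim) v))
        ↔ ((ts 0).realize (Sum.elim (fun x => x.elim) w)
          ≤ (ts 1).realize (Sum.elim (fun x => x.elim) w))
      rw [hz₁, hz₂, hg₁, hg₂]
      exact ⟨fun hh => (h.1 hh :), fun hh => (h.2 hh :)⟩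
    · exact R.elim
  | imp φ ψ ihφ ihψ =>
    obtain ⟨N₁, M₁, hM₁, h₁⟩ := ihφ
    obtain ⟨N₂, M₂, hM₂, h₂⟩ := ihψ
    refine ⟨max N₁ N₂, M₁ * M₂, Nat.mul_pos hM₁ hM₂, fun v w hE => ?_⟩
    have e₁ := h₁ v w (hE.mono (le_max_left _ _) ⟨M₂, by push_cast; ring⟩)
    have e₂ := h₂ v w (hE.mono (le_max_right _ _) ⟨M₁, by push_cast; ring⟩)
    simp only [Language.BoundedFormula.realize_imp]
    rw [e₁, e₂]
  | all φ ih =>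
    obtain ⟨N₀, M₀, hM₀, h₀⟩ := ih
    refine ⟨oagBumpN N₀ M₀, oagBumpM N₀ M₀,
      Nat.mul_pos N₀.factorial_pos hM₀, fun v w hE => ?_⟩
    rw [Language.BoundedFormula.realize_all, Language.BoundedFormula.realize_all]
    constructor
    · intro hz bG
      obtain ⟨a, hA⟩ := oag_bf2 hu0 humin hdiv hM₀ hE bG
      exact (h₀ _ _ hA).1 (hz a)
    · intro hg a
      obtain ⟨bG, hA⟩ := oag_bf1 hu0 humin hdiv hM₀ hE a
      exact (h₀ _ _ hA).2 (hg bG)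

/-- Realization of a sentence does not depend on the (empty) variable assignments. -/
lemma oag_realize_empty_inv {M : Type*} [oagLang.Structure M]
    (φ : oagLang.BoundedFormula Empty 0) (f g : Empty → M) (x y : Fin 0 → M) :
    φ.Realize f x ↔ φ.Realize g y := by
  have h1 : f = g := funext fun e => e.elim
  have h2 : x = y := funext fun i => i.elim0
  rw [h1, h2]

end F

end OAGDev

/-- Every regular discrete ordered abelian group is elementarily equivalent to
`(ℤ, +, <)` in the language of ordered groups. -/
theorem regular_discrete_elementarilyEquivalent_int {Γ : Type*} [AddCommGroup Γ] [LinearOrder Γ] [IsOrderedAddMonoid Γ]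
    (hreg : IsRegularOAG Γ)
    (hdisc : ∃ g : Γ, 0 < g ∧ ∀ h : Γ, 0 < h → g ≤ h) :
    Γ ≅[oagLang] ℤ := by
  obtain ⟨u, hu0, humin⟩ := hdisc
  have hdiv : ∀ m : ℤ, 0 < m → ∀ g : Γ, ∃ h z, 0 ≤ z ∧ z < m ∧ g = m • h + z • u :=
    fun m hm g => oag_div hreg hu0 humin m hm g
  rw [Language.elementarilyEquivalent_iff]
  intro φ
  obtain ⟨N, M, hM, h⟩ := oag_formula_transfer (G := Γ) (u := u) hu0 humin hdiv (n := 0) φ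
  have hA : OAGApprox u N M (default : Fin 0 → ℤ) (default : Fin 0 → Γ) := by
    constructor
    · intro i
      exact i.elim0
    · intro c d hc hd
      have e1 : zcomb c d (default : Fin 0 → ℤ) = d := by simp [zcomb]
      have e2 : gcomb u c d (default : Fin 0 → Γ) = d • u := by simp [gcomb]
      rw [e1, e2]
      constructor
      · intro h'
        have h2 : d • u ≤ (0:ℤ) • u := zsmul_le_zsmul_left hu0.le h'
        rwa [zero_smul] at h2
      · intro h'
        by_contra hc'
        push_neg at hc'
        exact absurd h' (not_le.2 (zsmul_pos hu0 hc'))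
  have h2 := h default default hA
  have hΓ : (Γ ⊨ φ) ↔ Language.BoundedFormula.Realize φ (fun x : Empty => x.elim)
      (default : Fin 0 → Γ) := by
    unfold Language.Sentence.Realize Language.Formula.Realize
    exact oag_realize_empty_inv φ _ _ _ _
  have hZ : (ℤ ⊨ φ) ↔ Language.BoundedFormula.Realize φ (fun x : Empty => x.elim)
      (default : Fin 0 → ℤ) := by
    unfold Language.Sentence.Realize Language.Formula.Realize
    exact oag_realize_empty_inv φ _ _ _ _
  exact hΓ.trans (h2.symm.trans hZ.symm)
end

section
/- Let K be a field, v a henselian valuation on K with algebraically closed residue field of characteristic 0 and p-divisible value group for a prime p. Then every element of K is a p-th power in K. -/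
open Polynomial IsLocalRing

/-- Let `K` be a field and `v` a henselian valuation on `K` with algebraically
closed residue field of characteristic `0` and `p`-divisible value group, for a
prime `p`.  Then every element of `K` is a `p`-th power in `K`. -/
theorem pth_power_of_henselian {K Γ₀ : Type*} [Field K] [LinearOrderedCommGroupWithZero Γ₀]
    (v : Valuation K Γ₀) (hs : Function.Surjective v)
    (hh : HenselianLocalRing v.valuationSubring)
    (halg : IsAlgClosed (IsLocalRing.ResidueField v.valuationSubring))
    (hchar : CharZero (IsLocalRing.ResidueField v.valuationSubring))
    (p : ℕ) (hp : p.Prime)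
    (hdiv : ∀ γ : Γ₀ˣ, ∃ δ : Γ₀ˣ, δ ^ p = γ) :
    ∀ x : K, ∃ y : K, y ^ p = x := by
  intro x
  rcases eq_or_ne x 0 with rfl | hx
  · exact ⟨0, by rw [zero_pow hp.ne_zero]⟩
  have hvx : v x ≠ 0 := v.ne_zero_iff.mpr hx
  obtain ⟨δ, hδ⟩ := hdiv (Units.mk0 (v x) hvx)
  obtain ⟨z, hz⟩ := hs (δ : Γ₀)
  have hz0 : z ≠ 0 := by
    intro h
    rw [h, map_zero] at hz
    exact δ.ne_zero hz.symm
  set u : K := x / z ^ p with hu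
  have hδp : (δ : Γ₀) ^ p = v x := by
    rw [← Units.val_pow_eq_pow_val, hδ, Units.val_mk0]
  have hvu : v u = 1 := by
    rw [hu, map_div₀, map_pow, hz, hδp, div_self hvx]
  set O := v.valuationSubring with hO
  set U : O := ⟨u, by rw [Valuation.mem_valuationSubring_iff, hvu]⟩ with hU
  have hu0 : u ≠ 0 := by
    intro h; rw [h, map_zero] at hvu; exact zero_ne_one hvu
  have hUunit : IsUnit U := by
    refine IsUnit.of_mul_eq_one (a := U) ⟨u⁻¹, ?_⟩ ?_
    · rw [Valuation.mem_valuationSubring_iff, map_inv₀, hvu, inv_one]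
    · ext; exact mul_inv_cancel₀ hu0
  have hresU : residue O U ≠ 0 := by
    intro h
    rw [residue_eq_zero_iff] at h
    exact notMem_maximalIdeal.mpr hUunit h
  obtain ⟨r, hr⟩ := IsAlgClosed.exists_pow_nat_eq (k := ResidueField O) (residue O U) hp.pos
  have hr0 : r ≠ 0 := by
    intro h; rw [h, zero_pow hp.ne_zero] at hr; exact hresU hr.symm
  obtain ⟨a₀, ha₀⟩ := residue_surjective (R := O) r
  set f : O[X] := X ^ p - C U with hf
  have hmonic : f.Monic := monic_X_pow_sub_C U hp.ne_zero
  have h1 : f.eval a₀ ∈ maximalIdeal O := by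
    rw [← residue_eq_zero_iff]
    have : f.eval a₀ = a₀ ^ p - U := by simp [hf]
    rw [this, map_sub, map_pow, ha₀, hr, sub_self]
  have h2 : IsUnit (f.derivative.eval a₀) := by
    rw [← notMem_maximalIdeal, ← residue_eq_zero_iff]
    have : f.derivative = C (p : O) * X ^ (p - 1) := by
      simp [hf, derivative_X_pow]
    rw [this]
    simp only [eval_mul, eval_pow, eval_C, eval_X, map_mul, map_pow, ha₀]
    refine mul_ne_zero ?_ (pow_ne_zero _ hr0)
    have : residue O ((p : ℕ) : O) = ((p : ℕ) : ResidueField O) := map_natCast _ p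
    rw [this]
    exact_mod_cast Nat.cast_ne_zero.mpr hp.ne_zero
  obtain ⟨a, haroot, -⟩ := hh.is_henselian f hmonic a₀ h1 h2
  have hap : a ^ p = U := by
    have : f.eval a = a ^ p - U := by simp [hf]
    rw [Polynomial.IsRoot, this, sub_eq_zero] at haroot
    exact haroot
  refine ⟨(a : K) * z, ?_⟩
  have : ((a : K)) ^ p = u := by
    have := congrArg (Subtype.val) hap
    simpa using this
  rw [mul_pow, this, hu, div_mul_cancel₀ _ (pow_ne_zero _ hz0)]
end

section
/- Let v, w be henselian valuations on a field K, both with non-divisible regular dense value groups and both with residue fields of characteristic 0. Then the valuation rings O_v and O_w are equal. -/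
/-- A convex subgroup of a (multiplicatively written) linearly ordered commutative group. -/
def IsConvexSubgroup {G : Type*} [CommGroup G] [LinearOrder G] [IsOrderedMonoid G] (H : Subgroup G) : Prop :=
  ∀ h ∈ H, ∀ g : G, 1 ≤ g → g ≤ h → g ∈ H

/-- A (multiplicatively written) group is divisible if every element has `n`-th
roots for all `n ≠ 0`. -/
def IsDivisibleGroup (G : Type*) [CommGroup G] : Prop :=
  ∀ x : G, ∀ n : ℕ, n ≠ 0 → ∃ y : G, y ^ n = x

/-- A regular linearly ordered commutative group: every quotient by a
nontrivial convex subgroup is divisible. -/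
def IsRegularGroup (G : Type*) [CommGroup G] [LinearOrder G] [IsOrderedMonoid G] : Prop :=
  ∀ H : Subgroup G, IsConvexSubgroup H → H ≠ ⊥ →
    ∀ x : G ⧸ H, ∀ n : ℕ, n ≠ 0 → ∃ y : G ⧸ H, y ^ n = x

/-- A dense linearly ordered commutative group: nontrivial, without a minimal
element `> 1`. -/
def IsDenseGroup (G : Type*) [CommGroup G] [LinearOrder G] [IsOrderedMonoid G] : Prop :=
  (∃ g : G, g ≠ 1) ∧ ¬ ∃ g : G, 1 < g ∧ ∀ h : G, 1 < h → g ≤ h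


section ValuationSubringUniqueAux

open IsLocalRing

section Helpers
variable {Γ : Type*} [LinearOrderedCommGroupWithZero Γ]

theorem my_inv_lt_one {g : Γ} (h : 1 < g) : g⁻¹ < 1 :=
  (inv_lt_one₀ (zero_lt_one.trans h)).mpr h

theorem my_one_le_inv {g : Γ} (h0 : g ≠ 0) (h : g ≤ 1) : 1 ≤ g⁻¹ := by
  have := mul_le_mul_right h g⁻¹
  rwa [inv_mul_cancel₀ h0, mul_one] at this

theorem my_mul_lt_one {g h : Γ} (hg : g ≤ 1) (hh : h < 1) : g * h < 1 := by
  calc g * h ≤ 1 * h := mul_le_mul_left hg h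
    _ = h := one_mul h
    _ < 1 := hh

theorem my_one_lt_mul {g h : Γ} (hg : 1 < g) (hh : 1 ≤ h) : 1 < g * h :=
  lt_of_lt_of_le hg (le_mul_of_one_le_right' hh)

end Helpers

variable {K : Type*} [Field K]

variable {Γ : Type*} [LinearOrderedCommGroupWithZero Γ]

theorem my_integers (v : Valuation K Γ) : v.Integers v.valuationSubring :=
  { hom_inj := Subtype.coe_injective
    map_le_one := fun r => r.2
    exists_of_le_one := fun r hr => ⟨⟨r, hr⟩, rfl⟩ }

theorem mem_max_iff (v : Valuation K Γ) (x : v.valuationSubring) :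
    x ∈ maximalIdeal v.valuationSubring ↔ v ↑x < 1 := by
  rw [IsLocalRing.mem_maximalIdeal _, mem_nonunits_iff, (my_integers v).isUnit_iff_valuation_eq_one]
  exact ⟨fun h => lt_of_le_of_ne x.2 h, fun h => ne_of_lt h⟩

theorem hensel_root (v : Valuation K Γ) (hh : HenselianLocalRing v.valuationSubring)
    (hch : CharZero (IsLocalRing.ResidueField v.valuationSubring))
    {u : K} (hu : v (u - 1) < 1) {n : ℕ} (hn : n ≠ 0) : ∃ y : K, y ≠ 0 ∧ y ^ n = u := by
  have hu1 : v u = 1 := by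
    have := v.map_one_add_of_lt (x := u - 1) hu
    simpa using this
  have huA : u ∈ v.valuationSubring := le_of_eq hu1
  set U : v.valuationSubring := ⟨u, huA⟩ with hU
  set f : Polynomial v.valuationSubring := Polynomial.X ^ n - Polynomial.C U with hf
  have hmonic : f.Monic := Polynomial.monic_X_pow_sub_C U hn
  have heval : f.eval 1 = 1 - U := by simp [hf]
  have hmem : f.eval 1 ∈ maximalIdeal v.valuationSubring := by
    rw [heval, mem_max_iff]
    have : ((1 - U : v.valuationSubring) : K) = 1 - u := rfl
    rw [this, Valuation.map_sub_swap]
    exact hu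
  have hderiv : f.derivative.eval 1 = (n : v.valuationSubring) := by
    simp [hf, Polynomial.derivative_X_pow]
  have hunit : IsUnit (f.derivative.eval 1) := by
    rw [hderiv]
    by_contra hcon
    have h1 : (n : v.valuationSubring) ∈ maximalIdeal v.valuationSubring :=
      (IsLocalRing.mem_maximalIdeal _).mpr hcon
    have h2 : (IsLocalRing.residue v.valuationSubring) (n : v.valuationSubring) = 0 :=
      (Ideal.Quotient.eq_zero_iff_mem).mpr h1
    rw [map_natCast] at h2
    exact hn (Nat.cast_eq_zero.mp h2)
  obtain ⟨a, ha, -⟩ := hh.is_henselian f hmonic 1 hmem hunit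
  have ha' : a ^ n = U := by
    have := ha
    simp only [Polynomial.IsRoot, hf, Polynomial.eval_sub, Polynomial.eval_pow,
      Polynomial.eval_X, Polynomial.eval_C, sub_eq_zero] at this
    exact this
  refine ⟨(a : K), ?_, ?_⟩
  · intro h0
    have : (U : K) = 0 := by
      rw [← congrArg (Subtype.val) ha']
      push_cast [h0]
      simp [zero_pow hn]
    rw [hU] at this
    simp only at this
    rw [this] at hu1
    simp at hu1
  · have := congrArg (Subtype.val) ha'
    push_cast at this
    exact this

theorem good_region {Γw : Type*} [LinearOrderedCommGroupWithZero Γw]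
    (v : Valuation K Γ) (w : Valuation K Γw)
    (hhv : HenselianLocalRing v.valuationSubring) (hhw : HenselianLocalRing w.valuationSubring)
    (hchv : CharZero (IsLocalRing.ResidueField v.valuationSubring))
    (hchw : CharZero (IsLocalRing.ResidueField w.valuationSubring))
    {x : K} (h1 : v x < 1) (h2 : 1 < w x) {n : ℕ} (hn : n ≠ 0) :
    ∃ y : K, y ≠ 0 ∧ y ^ n = x := by
  have hx0 : x ≠ 0 := by
    intro h; rw [h, map_zero] at h2; exact absurd h2 (by simp)
  obtain ⟨y₁, hy₁0, hy₁⟩ := hensel_root v hhv hchv (u := 1 + x) (by simpa using h1) hn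
  have hwxi : w x⁻¹ < 1 := by
    rw [map_inv₀]
    exact inv_lt_one₀ (lt_trans zero_lt_one h2) |>.mpr h2
  obtain ⟨y₂, hy₂0, hy₂⟩ := hensel_root w hhw hchw (u := 1 + x⁻¹) (by simpa using hwxi) hn
  have hne : (1 : K) + x⁻¹ ≠ 0 := by
    intro h
    have := w.map_one_add_of_lt hwxi
    rw [h, map_zero] at this
    exact zero_ne_one this
  have key : (1 + x) * (1 + x⁻¹)⁻¹ = x := by
    rw [eq_comm, eq_mul_inv_iff_mul_eq₀ hne]
    field_simp
    ring
  exact ⟨y₁ * y₂⁻¹, by simp [hy₁0, hy₂0], by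
    rw [mul_pow, inv_pow, hy₁, hy₂, key]⟩

theorem comp_case {Γv Γw : Type*} [LinearOrderedCommGroupWithZero Γv]
    [LinearOrderedCommGroupWithZero Γw]
    (v : Valuation K Γv) (w : Valuation K Γw)
    (hsv : Function.Surjective v) (hsw : Function.Surjective w)
    (hregv : IsRegularGroup Γvˣ) (hndw : ¬ IsDivisibleGroup Γwˣ)
    (hle : v.valuationSubring ≤ w.valuationSubring)
    (hne : v.valuationSubring ≠ w.valuationSubring) : False := by
  apply hndw
  have hle' : ∀ z : K, v z ≤ 1 → w z ≤ 1 := fun z hz => hle hz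
  -- the subgroup of values of w-units
  let Δ : Subgroup Γvˣ :=
    { carrier := {γ | ∃ x : K, w x = 1 ∧ v x = ↑γ}
      one_mem' := ⟨1, by simp, by simp⟩
      mul_mem' := by
        rintro γ₁ γ₂ ⟨x₁, hw₁, hv₁⟩ ⟨x₂, hw₂, hv₂⟩
        exact ⟨x₁ * x₂, by rw [map_mul, hw₁, hw₂, one_mul],
          by rw [map_mul, hv₁, hv₂, Units.val_mul]⟩
      inv_mem' := by
        rintro γ ⟨x, hwx, hvx⟩
        exact ⟨x⁻¹, by rw [map_inv₀, hwx, inv_one],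
          by rw [map_inv₀, hvx]; exact (Units.val_inv_eq_inv_val γ).symm⟩ }
  have hmemΔ : ∀ γ : Γvˣ, γ ∈ Δ ↔ ∃ x : K, w x = 1 ∧ v x = ↑γ := fun γ => Iff.rfl
  have hconv : IsConvexSubgroup Δ := by
    rintro h ⟨x, hwx, hvx⟩ g hg1 hgh
    obtain ⟨z, hz⟩ := hsv ↑g
    have hx0 : x ≠ 0 := by
      intro h0; rw [h0, map_zero] at hwx; exact zero_ne_one hwx
    have hz0 : z ≠ 0 := by
      intro h0; rw [h0, map_zero] at hz; exact (Units.ne_zero g) hz.symm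
    have hwz0 : w z ≠ 0 := (Valuation.ne_zero_iff w).mpr hz0
    have hwz_le : w z ≤ 1 := by
      have h1 : v (z * x⁻¹) ≤ 1 := by
        rw [map_mul, map_inv₀, hz, hvx]
        calc (↑g : Γv) * (↑h)⁻¹ ≤ ↑h * (↑h)⁻¹ :=
              mul_le_mul_left (Units.val_le_val.mpr hgh) _
          _ = 1 := mul_inv_cancel₀ h.ne_zero
      have h2 := hle' _ h1
      rw [map_mul, map_inv₀, hwx, inv_one, mul_one] at h2
      exact h2
    have hwz_ge : 1 ≤ w z := by
      have h1 : v z⁻¹ ≤ 1 := by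
        rw [map_inv₀, hz, ← Units.val_inv_eq_inv_val, ← Units.val_one (α := Γv),
          Units.val_le_val]
        exact inv_le_one'.mpr hg1
      have h2 := hle' _ h1
      rw [map_inv₀] at h2
      have h3 := mul_le_mul_left h2 (w z)
      rwa [inv_mul_cancel₀ hwz0, one_mul] at h3
    exact ⟨z, le_antisymm hwz_le hwz_ge, hz⟩
  have hnb : Δ ≠ ⊥ := by
    obtain ⟨x0, hx0B, hx0A⟩ := SetLike.exists_of_lt (lt_of_le_of_ne hle hne)
    have hvx0 : 1 < v x0 := lt_of_not_ge hx0A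
    have hwx0 : w x0 = 1 := by
      refine le_antisymm hx0B ?_
      have h1 : v x0⁻¹ ≤ 1 := by
        rw [map_inv₀]
        exact (inv_le_one₀ (lt_trans zero_lt_one hvx0)).mpr hvx0.le
      have h2 := hle' _ h1
      rw [map_inv₀] at h2
      have hx00 : x0 ≠ 0 := by
        intro h0; rw [h0, map_zero] at hvx0; exact absurd hvx0 (by simp)
      have hwx0' : w x0 ≠ 0 := (Valuation.ne_zero_iff w).mpr hx00
      have h3 := mul_le_mul_left h2 (w x0)
      rwa [inv_mul_cancel₀ hwx0', one_mul] at h3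
    intro hbot
    have : Units.mk0 (v x0) (ne_of_gt (lt_trans zero_lt_one hvx0)) ∈ Δ :=
      ⟨x0, hwx0, rfl⟩
    rw [hbot, Subgroup.mem_bot] at this
    have := congrArg Units.val this
    rw [Units.val_mk0, Units.val_one] at this
    exact absurd this (by
      intro h'
      rw [h'] at hvx0
      exact lt_irrefl _ hvx0)
  -- divisibility of Γwˣ
  intro ξ n hn
  obtain ⟨x, hx⟩ := hsw ↑ξ
  have hx0 : x ≠ 0 := by
    intro h0; rw [h0, map_zero] at hx; exact (Units.ne_zero ξ) hx.symm
  have hvx0 : v x ≠ 0 := (Valuation.ne_zero_iff v).mpr hx0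
  set γ : Γvˣ := Units.mk0 (v x) hvx0 with hγ
  obtain ⟨q, hq⟩ := hregv Δ hconv hnb (QuotientGroup.mk γ) n hn
  obtain ⟨η, rfl⟩ := QuotientGroup.mk_surjective q
  rw [← QuotientGroup.mk_pow] at hq
  have hd : (η ^ n)⁻¹ * γ ∈ Δ := QuotientGroup.eq.mp hq
  obtain ⟨u, hwu, hvu⟩ := hd
  obtain ⟨z, hz⟩ := hsv ↑η
  have hz0 : z ≠ 0 := by
    intro h0; rw [h0, map_zero] at hz; exact (Units.ne_zero η) hz.symm
  have hu0 : u ≠ 0 := by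
    intro h0; rw [h0, map_zero] at hwu; exact zero_ne_one hwu
  -- e := x * (z^n * u)⁻¹ has v-value 1
  have hve : v (x * (z ^ n * u)⁻¹) = 1 := by
    have hvxγ : v x = (γ : Γv) := rfl
    have hcalc : γ * (η ^ n * ((η ^ n)⁻¹ * γ))⁻¹ = 1 := by group
    rw [map_mul, map_inv₀, map_mul, map_pow, hz, hvu, hvxγ,
      ← Units.val_pow_eq_pow_val, ← Units.val_mul, ← Units.val_inv_eq_inv_val,
      ← Units.val_mul, hcalc, Units.val_one]
  have hwe : w (x * (z ^ n * u)⁻¹) = 1 := by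
    have h1 := hle' _ (le_of_eq hve)
    have h2 : v (x * (z ^ n * u)⁻¹)⁻¹ ≤ 1 := by rw [map_inv₀, hve, inv_one]
    have h3 := hle' _ h2
    rw [map_inv₀] at h3
    have hne0 : w (x * (z ^ n * u)⁻¹) ≠ 0 := by
      refine (Valuation.ne_zero_iff w).mpr ?_
      simp [hx0, hz0, hu0, pow_ne_zero]
    have h4 := mul_le_mul_left h3 (w (x * (z ^ n * u)⁻¹))
    rw [inv_mul_cancel₀ hne0, one_mul] at h4
    exact le_antisymm h1 h4
  have hxw : w x = w z ^ n := by
    have : w x = w (x * (z ^ n * u)⁻¹) * (w z ^ n * w u) := by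
      have ha : w z ^ n * w u ≠ 0 := by
        simp [pow_ne_zero, (Valuation.ne_zero_iff w).mpr hz0, (Valuation.ne_zero_iff w).mpr hu0]
      rw [map_mul, map_inv₀, map_mul, map_pow]
      field_simp
      rw [mul_assoc, mul_div_cancel_right₀ _ ha]
    rw [this, hwe, hwu, one_mul, mul_one]
  have hwz0 : w z ≠ 0 := (Valuation.ne_zero_iff w).mpr hz0
  refine ⟨Units.mk0 (w z) hwz0, ?_⟩
  apply Units.ext
  rw [Units.val_pow_eq_pow_val, Units.val_mk0, ← hxw, hx]

theorem incomp_case {Γv Γw : Type*} [LinearOrderedCommGroupWithZero Γv]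
    [LinearOrderedCommGroupWithZero Γw]
    (v : Valuation K Γv) (w : Valuation K Γw)
    (hsv : Function.Surjective v)
    (hhv : HenselianLocalRing v.valuationSubring) (hhw : HenselianLocalRing w.valuationSubring)
    (hchv : CharZero (IsLocalRing.ResidueField v.valuationSubring))
    (hchw : CharZero (IsLocalRing.ResidueField w.valuationSubring))
    (hregv : IsRegularGroup Γvˣ) (hndv : ¬ IsDivisibleGroup Γvˣ)
    (hab : ¬ v.valuationSubring ≤ w.valuationSubring)
    (hba : ¬ w.valuationSubring ≤ v.valuationSubring) : False := by
  apply hndv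
  rw [SetLike.not_le_iff_exists] at hab hba
  obtain ⟨a, hva, haB⟩ := hab
  obtain ⟨b, hwb, hbA⟩ := hba
  simp only [Valuation.mem_valuationSubring_iff, not_le] at hva hwb haB hbA
  have hwa : 1 < w a := haB
  have hvb : 1 < v b := hbA
  have ha0 : a ≠ 0 := by
    intro h0; rw [h0, map_zero] at hwa; exact absurd hwa (not_lt.mpr zero_le')
  have hb0 : b ≠ 0 := by
    intro h0; rw [h0, map_zero] at hvb; exact absurd hvb (not_lt.mpr zero_le')
  -- the subring generated by both valuation rings
  set C : Subring K := v.valuationSubring.toSubring ⊔ w.valuationSubring.toSubring with hC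
  have hAC : ∀ z : K, v z ≤ 1 → z ∈ C :=
    fun z hz => (le_sup_left : v.valuationSubring.toSubring ≤ C) hz
  have hBC : ∀ z : K, w z ≤ 1 → z ∈ C :=
    fun z hz => (le_sup_right : w.valuationSubring.toSubring ≤ C) hz
  -- the element t
  set t : K := a * b⁻¹ with ht
  have ht0 : t ≠ 0 := mul_ne_zero ha0 (inv_ne_zero hb0)
  have htv : v t < 1 := by
    rw [ht, map_mul, map_inv₀]
    exact my_mul_lt_one hva (my_inv_lt_one hvb)
  have htw : 1 < w t := by
    rw [ht, map_mul, map_inv₀]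
    exact my_one_lt_mul hwa (my_one_le_inv ((Valuation.ne_zero_iff w).mpr hb0) hwb)
  have htC : t ∈ C := mul_mem (hAC a hva) (hAC b⁻¹ (by rw [map_inv₀]; exact (my_inv_lt_one hvb).le))
  have htiC : t⁻¹ ∈ C := by
    rw [ht, mul_inv, inv_inv]
    exact mul_mem (hBC a⁻¹ (by rw [map_inv₀]; exact (my_inv_lt_one hwa).le)) (hBC b hwb)
  -- the predicate P
  set P : K → Prop := fun s => s ∈ C ∧ s⁻¹ ∈ C ∧ w s < 1 ∧ 1 < v s with hP
  have hPt : P t⁻¹ := by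
    refine ⟨htiC, by rwa [inv_inv], ?_, ?_⟩
    · rw [map_inv₀]; exact my_inv_lt_one htw
    · rw [map_inv₀]
      have h0 : v t ≠ 0 := (Valuation.ne_zero_iff v).mpr ht0
      have := mul_le_mul_right htv.le (v t)⁻¹
      by_contra hcon
      push_neg at hcon
      have h2 := mul_le_mul_right hcon (v t)
      rw [mul_inv_cancel₀ h0, mul_one] at h2
      exact absurd (lt_of_lt_of_le htv h2) (lt_irrefl _)
  have hPne : ∀ s, P s → s ≠ 0 := by
    intro s hs h0
    have h2 := hs.2.2.2
    rw [h0, map_zero] at h2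
    exact absurd h2 (not_lt.mpr zero_le')
  have hPmul : ∀ s₁ s₂, P s₁ → P s₂ → P (s₁ * s₂) := by
    rintro s₁ s₂ ⟨hC₁, hiC₁, hw₁, hv₁⟩ ⟨hC₂, hiC₂, hw₂, hv₂⟩
    refine ⟨mul_mem hC₁ hC₂, by rw [mul_inv]; exact mul_mem hiC₁ hiC₂, ?_, ?_⟩
    · rw [map_mul]; exact my_mul_lt_one hw₁.le hw₂
    · rw [map_mul]; exact my_one_lt_mul hv₁ hv₂.le
  -- the approximation property
  have star : ∀ x : K, x ≠ 0 → x ∈ C → x⁻¹ ∈ C → ∃ s, P s ∧ w s ≤ w x := by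
    intro x hx0 hxC hxiC
    set E : Subring K :=
      { carrier := {z | ∃ s, P s ∧ w z * w s ≤ 1}
        zero_mem' := ⟨t⁻¹, hPt, by rw [map_zero, zero_mul]; exact zero_le_one⟩
        one_mem' := ⟨t⁻¹, hPt, by rw [map_one, one_mul]; exact hPt.2.2.1.le⟩
        add_mem' := by
          rintro z₁ z₂ ⟨s₁, hs₁, hb₁⟩ ⟨s₂, hs₂, hb₂⟩
          refine ⟨s₁ * s₂, hPmul _ _ hs₁ hs₂, ?_⟩
          rcases le_total (w z₁) (w z₂) with hle | hle
          · have hz : w (z₁ + z₂) ≤ w z₂ := le_trans (w.map_add _ _) (max_le hle le_rfl)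
            calc w (z₁ + z₂) * w (s₁ * s₂) ≤ w z₂ * w (s₁ * s₂) := mul_le_mul_left hz _
              _ = w z₂ * w s₂ * w s₁ := by rw [map_mul, mul_comm (w s₁) (w s₂), ← mul_assoc]
              _ ≤ 1 * w s₁ := mul_le_mul_left hb₂ _
              _ = w s₁ := one_mul _
              _ ≤ 1 := hs₁.2.2.1.le
          · have hz : w (z₁ + z₂) ≤ w z₁ := le_trans (w.map_add _ _) (max_le le_rfl hle)
            calc w (z₁ + z₂) * w (s₁ * s₂) ≤ w z₁ * w (s₁ * s₂) := mul_le_mul_left hz _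
              _ = w z₁ * w s₁ * w s₂ := by rw [map_mul, ← mul_assoc]
              _ ≤ 1 * w s₂ := mul_le_mul_left hb₁ _
              _ = w s₂ := one_mul _
              _ ≤ 1 := hs₂.2.2.1.le
        neg_mem' := by
          rintro z ⟨s, hs, hb⟩
          exact ⟨s, hs, by rwa [w.map_neg]⟩
        mul_mem' := by
          rintro z₁ z₂ ⟨s₁, hs₁, hb₁⟩ ⟨s₂, hs₂, hb₂⟩
          refine ⟨s₁ * s₂, hPmul _ _ hs₁ hs₂, ?_⟩
          calc w (z₁ * z₂) * w (s₁ * s₂) = (w z₁ * w s₁) * (w z₂ * w s₂) := by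
                rw [map_mul, map_mul, mul_mul_mul_comm]
            _ ≤ 1 * 1 := mul_le_mul' hb₁ hb₂
            _ = 1 := one_mul 1 }
    have hBE : w.valuationSubring.toSubring ≤ E := by
      intro y hy
      have hy' : w y ≤ 1 := hy
      exact ⟨t⁻¹, hPt, by
        calc w y * w t⁻¹ ≤ 1 * w t⁻¹ := mul_le_mul_left hy' _
          _ = w t⁻¹ := one_mul _
          _ ≤ 1 := hPt.2.2.1.le⟩
    have hAE : v.valuationSubring.toSubring ≤ E := by
      intro y hy
      have hy' : v y ≤ 1 := hy
      rcases le_or_gt (w y) 1 with h | h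
      · exact ⟨t⁻¹, hPt, by
          calc w y * w t⁻¹ ≤ 1 * w t⁻¹ := mul_le_mul_left h _
            _ = w t⁻¹ := one_mul _
            _ ≤ 1 := hPt.2.2.1.le⟩
      · have hy0 : y ≠ 0 := by
          intro h0; rw [h0, map_zero] at h; exact absurd h (not_lt.mpr zero_le')
        have hwy0 : w y ≠ 0 := (Valuation.ne_zero_iff w).mpr hy0
        refine ⟨t⁻¹ * y⁻¹, ⟨?_, ?_, ?_, ?_⟩, ?_⟩
        · exact mul_mem htiC (hBC y⁻¹ (by rw [map_inv₀]; exact (my_inv_lt_one h).le))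
        · rw [mul_inv, inv_inv, inv_inv]
          exact mul_mem htC (hAC y hy')
        · rw [map_mul, map_inv₀, map_inv₀]
          exact my_mul_lt_one (my_inv_lt_one htw).le (my_inv_lt_one h)
        · rw [map_mul, map_inv₀, map_inv₀]
          refine my_one_lt_mul ?_ (my_one_le_inv ((Valuation.ne_zero_iff v).mpr hy0) hy')
          have h0 : v t ≠ 0 := (Valuation.ne_zero_iff v).mpr ht0
          by_contra hcon
          push_neg at hcon
          have h2 := mul_le_mul_right hcon (v t)
          rw [mul_inv_cancel₀ h0, mul_one] at h2
          exact absurd (lt_of_lt_of_le htv h2) (lt_irrefl _)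
        · rw [map_mul, map_inv₀ w y]
          calc w y * (w t⁻¹ * (w y)⁻¹) = w t⁻¹ * (w y * (w y)⁻¹) :=
                mul_left_comm (w y) (w t⁻¹) ((w y)⁻¹)
            _ = w t⁻¹ := by rw [mul_inv_cancel₀ hwy0, mul_one]
            _ ≤ 1 := hPt.2.2.1.le
    have hCE : C ≤ E := sup_le hAE hBE
    obtain ⟨s, hs, hb⟩ := hCE hxiC
    refine ⟨s, hs, ?_⟩
    have hwx0 : w x ≠ 0 := (Valuation.ne_zero_iff w).mpr hx0
    rw [map_inv₀] at hb
    have h2 := mul_le_mul_right hb (w x)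
    rwa [← mul_assoc, mul_inv_cancel₀ hwx0, one_mul, mul_one] at h2
  -- every unit of C is an n-th power
  have aux : ∀ n : ℕ, n ≠ 0 → ∀ x : K, x ≠ 0 → x ∈ C → x⁻¹ ∈ C → v x < 1 →
      ∃ y : K, y ≠ 0 ∧ y ^ n = x := by
    intro n hn x hx0 hxC hxiC hvx
    obtain ⟨s, ⟨hsC, hsiC, hws, hvs⟩, hwsx⟩ := star x hx0 hxC hxiC
    have hs0 : s ≠ 0 := hPne s ⟨hsC, hsiC, hws, hvs⟩
    have hws0 : w s ≠ 0 := (Valuation.ne_zero_iff w).mpr hs0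
    set y : K := x * s⁻¹ with hy
    have hy0 : y ≠ 0 := mul_ne_zero hx0 (inv_ne_zero hs0)
    have hwy_ge : 1 ≤ w y := by
      rw [hy, map_mul, map_inv₀]
      have := mul_le_mul_left hwsx (w s)⁻¹
      rwa [mul_inv_cancel₀ hws0] at this
    have hvy : v y < 1 := by
      rw [hy, map_mul, map_inv₀]
      exact my_mul_lt_one hvx.le (my_inv_lt_one hvs)
    obtain ⟨ζ, hζ0, hζ⟩ := good_region w v hhw hhv hchw hchv hws hvs hn
    rcases eq_or_lt_of_le hwy_ge with heq | hlt
    · -- w y = 1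
      have h1 : v (y * t) < 1 := by
        rw [map_mul]; exact my_mul_lt_one hvy.le htv
      have h2 : 1 < w (y * t) := by
        rw [map_mul, ← heq, one_mul]; exact htw
      obtain ⟨η, hη0, hη⟩ := good_region v w hhv hhw hchv hchw h1 h2 hn
      obtain ⟨τ, hτ0, hτ⟩ := good_region v w hhv hhw hchv hchw htv htw hn
      refine ⟨η * τ⁻¹ * ζ, by simp [hη0, hτ0, hζ0], ?_⟩
      rw [mul_pow, mul_pow, inv_pow, hη, hτ, hζ, hy]
      field_simp
      try ring
    · obtain ⟨η, hη0, hη⟩ := good_region v w hhv hhw hchv hchw hvy hlt hn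
      refine ⟨η * ζ, by simp [hη0, hζ0], ?_⟩
      rw [mul_pow, hη, hζ, hy]
      field_simp
      try ring
  have main : ∀ x : K, x ≠ 0 → x ∈ C → x⁻¹ ∈ C → ∀ n : ℕ, n ≠ 0 →
      ∃ y : K, y ≠ 0 ∧ y ^ n = x := by
    intro x hx0 hxC hxiC n hn
    rcases lt_trichotomy (v x) 1 with hlt | heq | hgt
    · exact aux n hn x hx0 hxC hxiC hlt
    · have h1 : v (x * t) < 1 := by rw [map_mul, heq, one_mul]; exact htv
      have hxt0 : x * t ≠ 0 := mul_ne_zero hx0 ht0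
      have hxtC : x * t ∈ C := mul_mem hxC htC
      have hxtiC : (x * t)⁻¹ ∈ C := by rw [mul_inv]; exact mul_mem hxiC htiC
      obtain ⟨y, hy0, hyn⟩ := aux n hn (x * t) hxt0 hxtC hxtiC h1
      obtain ⟨τ, hτ0, hτ⟩ := good_region v w hhv hhw hchv hchw htv htw hn
      refine ⟨y * τ⁻¹, by simp [hy0, hτ0], ?_⟩
      rw [mul_pow, inv_pow, hyn, hτ]
      field_simp
      try ring
    · have h1 : v x⁻¹ < 1 := by rw [map_inv₀]; exact my_inv_lt_one hgt
      obtain ⟨y, hy0, hyn⟩ := aux n hn x⁻¹ (inv_ne_zero hx0) hxiC (by rwa [inv_inv]) h1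
      exact ⟨y⁻¹, inv_ne_zero hy0, by rw [inv_pow, hyn, inv_inv]⟩
  -- the convex subgroup
  set Δ : Subgroup Γvˣ :=
    { carrier := {γ | ∃ x : K, x ≠ 0 ∧ x ∈ C ∧ x⁻¹ ∈ C ∧ v x = ↑γ}
      one_mem' := ⟨1, one_ne_zero, one_mem C, by rw [inv_one]; exact one_mem C, by simp⟩
      mul_mem' := by
        rintro γ₁ γ₂ ⟨x₁, h0₁, hC₁, hiC₁, hv₁⟩ ⟨x₂, h0₂, hC₂, hiC₂, hv₂⟩
        exact ⟨x₁ * x₂, mul_ne_zero h0₁ h0₂, mul_mem hC₁ hC₂,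
          by rw [mul_inv]; exact mul_mem hiC₁ hiC₂,
          by rw [map_mul, hv₁, hv₂, Units.val_mul]⟩
      inv_mem' := by
        rintro γ ⟨x, h0, hCx, hiCx, hvx⟩
        exact ⟨x⁻¹, inv_ne_zero h0, hiCx, by rwa [inv_inv],
          by rw [map_inv₀, hvx]; exact (Units.val_inv_eq_inv_val γ).symm⟩ } with hΔ
  have hconv : IsConvexSubgroup Δ := by
    rintro h ⟨x, hx0, hxC, hxiC, hvx⟩ g hg1 hgh
    obtain ⟨z, hz⟩ := hsv ↑g
    have hz0 : z ≠ 0 := by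
      intro h0; rw [h0, map_zero] at hz; exact (Units.ne_zero g) hz.symm
    have h1 : v (z * x⁻¹) ≤ 1 := by
      rw [map_mul, map_inv₀, hz, hvx]
      calc (↑g : Γv) * (↑h)⁻¹ ≤ ↑h * (↑h)⁻¹ :=
            mul_le_mul_left (Units.val_le_val.mpr hgh) _
        _ = 1 := mul_inv_cancel₀ h.ne_zero
    have hzC : z ∈ C := by
      have : z * x⁻¹ * x = z := by field_simp
      rw [← this]
      exact mul_mem (hAC _ h1) hxC
    have hziC : z⁻¹ ∈ C := by
      refine hAC z⁻¹ ?_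
      rw [map_inv₀, hz, ← Units.val_inv_eq_inv_val, ← Units.val_one (α := Γv), Units.val_le_val]
      exact inv_le_one'.mpr hg1
    exact ⟨z, hz0, hzC, hziC, hz⟩
  have hnb : Δ ≠ ⊥ := by
    intro hbot
    have hmem : Units.mk0 (v b) (ne_of_gt (zero_lt_one.trans hvb)) ∈ Δ :=
      ⟨b, hb0, hBC b hwb, hAC b⁻¹ (by rw [map_inv₀]; exact (my_inv_lt_one hvb).le), rfl⟩
    rw [hbot, Subgroup.mem_bot] at hmem
    have := congrArg Units.val hmem
    rw [Units.val_mk0, Units.val_one] at this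
    rw [this] at hvb
    exact lt_irrefl _ hvb
  -- conclude divisibility
  intro ξ n hn
  obtain ⟨q, hq⟩ := hregv Δ hconv hnb (QuotientGroup.mk ξ) n hn
  obtain ⟨η, rfl⟩ := QuotientGroup.mk_surjective q
  rw [← QuotientGroup.mk_pow] at hq
  have hd : (η ^ n)⁻¹ * ξ ∈ Δ := QuotientGroup.eq.mp hq
  obtain ⟨x, hx0, hxC, hxiC, hvx⟩ := hd
  obtain ⟨y, hy0, hyn⟩ := main x hx0 hxC hxiC n hn
  have hvy0 : v y ≠ 0 := (Valuation.ne_zero_iff v).mpr hy0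
  refine ⟨η * Units.mk0 (v y) hvy0, ?_⟩
  have hpow : (Units.mk0 (v y) hvy0) ^ n = (η ^ n)⁻¹ * ξ := by
    apply Units.ext
    rw [Units.val_pow_eq_pow_val, Units.val_mk0, ← map_pow, hyn, hvx]
  rw [mul_pow, hpow, ← mul_assoc]
  rw [mul_inv_cancel, one_mul]

end ValuationSubringUniqueAux

/-- Let `v`, `w` be henselian valuations on a field `K`, both with non-divisible
regular dense value groups and residue fields of characteristic `0`.
Then the valuation rings `O_v` and `O_w` are equal. -/
theorem valuationSubring_unique {K : Type*} [Field K]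
    {Γv Γw : Type*} [LinearOrderedCommGroupWithZero Γv] [LinearOrderedCommGroupWithZero Γw]
    (v : Valuation K Γv) (w : Valuation K Γw)
    (hsv : Function.Surjective v) (hsw : Function.Surjective w)
    (hhv : HenselianLocalRing v.valuationSubring)
    (hhw : HenselianLocalRing w.valuationSubring)
    (hregv : IsRegularGroup Γvˣ) (hregw : IsRegularGroup Γwˣ)
    (hdenv : IsDenseGroup Γvˣ) (hdenw : IsDenseGroup Γwˣ)
    (hndv : ¬ IsDivisibleGroup Γvˣ) (hndw : ¬ IsDivisibleGroup Γwˣ)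
    (hcharv : CharZero (IsLocalRing.ResidueField v.valuationSubring))
    (hcharw : CharZero (IsLocalRing.ResidueField w.valuationSubring)) :
    v.valuationSubring = w.valuationSubring := by
  by_cases h1 : v.valuationSubring ≤ w.valuationSubring
  · by_cases h2 : w.valuationSubring ≤ v.valuationSubring
    · exact le_antisymm h1 h2
    · exact absurd (comp_case v w hsv hsw hregv hndw h1
        (fun he => h2 (le_of_eq he.symm))) not_false
  · by_cases h2 : w.valuationSubring ≤ v.valuationSubring
    · exact absurd (comp_case w v hsw hsv hregw hndv h2
        (fun he => h1 (le_of_eq he.symm))) not_false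
    · exact absurd (incomp_case v w hsv hhv hhw hcharv hcharw hregv hndv h1 h2) not_false
end
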